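/- arXiv:2408.05632 — 3 statements merged into one kernel-verified Lean document; each statement's English description precedes it below -/
import Mathlib

section
/- Let T : l∞ → l∞ be a continuous positive linear map with adjoint T*, and let F = { p ∈ Δ^σ : there exists λ ∈ ℝ with ⟨T(x), p⟩ = λ·⟨x, p⟩ for all x ∈ l∞ }. (i) If a binary relation ≿ on l∞ satisfies axioms (A1)–(A5), Monotone Continuity (MC), ISU, and ITIS, then there exists a nonempty set D ⊆ F, closed in Δ for the weak* topology, such that I(x) = min_{p∈D} Σ_{n=0}^∞ p_n x_n is the unique constant equivalent representing ≿. (ii) Conversely, if ⟨1, T*(p)⟩ ≤ 1 for every p ∈ F and I(x) = min_{p∈D} ⟨x,p⟩ for some nonempty D ⊆ F closed in Δ, then the relation ≿ represented by I satisfies axioms (A1)–(A5), (MC), ISU, and ITIS. -/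
open scoped ENNReal BoundedContinuousFunction

noncomputable section

/-- `l∞`: the Banach space of bounded real sequences with the sup norm. -/
abbrev Linf : Type := BoundedContinuousFunction ℕ ℝ

/-- `ba(ℕ)`: the norm dual of `l∞`, endowed with the weak* topology. -/
abbrev Ba : Type := WeakDual ℝ Linf

/-- The constant sequence `(θ, θ, ...)`. -/
def cst (θ : ℝ) : Linf := BoundedContinuousFunction.const ℕ θ

/-- Build an element of `l∞` from a bounded sequence. -/
def ofSeq (f : ℕ → ℝ) (C : ℝ) (h : ∀ n, |f n| ≤ C) : Linf :=
  BoundedContinuousFunction.ofNormedAddCommGroupDiscrete f C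
    (by simpa [Real.norm_eq_abs] using h)

/-- The delayed sequence `(0, d₀, d₁, d₂, ...)`. -/
def delaySeq (d : Linf) : Linf :=
  ofSeq (fun n => if n = 0 then 0 else d (n - 1)) ‖d‖ (by
    intro n
    by_cases h : n = 0
    · simp [h]
    · simpa [h, Real.norm_eq_abs] using d.norm_coe_le_norm (n - 1))

/-- The shifted sequence `(x₁, x₂, x₃, ...)`. -/
def shiftSeq (x : Linf) : Linf :=
  x.compContinuous ⟨fun n => n + 1, continuous_of_discreteTopology⟩

/-- The permuted sequence `x_σ = (x_{σ 0}, x_{σ 1}, ...)`. -/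
def permSeq (σ : Equiv.Perm ℕ) (x : Linf) : Linf :=
  x.compContinuous ⟨fun n => σ n, continuous_of_discreteTopology⟩

/-- The indicator sequence of a set `A ⊆ ℕ`. -/
def indic (A : Set ℕ) : Linf :=
  ofSeq (A.indicator fun _ => (1 : ℝ)) 1 (by
    intro n
    by_cases h : n ∈ A
    · simp [Set.indicator_of_mem h]
    · simp [Set.indicator_of_notMem h])

/-- `kEx`: the sequence equal to `k` on `E` and to `x` off `E`. -/
def patch (k : ℝ) (E : Set ℕ) (x : Linf) : Linf :=
  ofSeq (fun n => E.indicator (fun _ => k) n + Eᶜ.indicator (fun m => x m) n)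
    (|k| + ‖x‖) (by
    intro n
    by_cases h : n ∈ E
    · simp only [Set.indicator_of_mem h, Set.indicator_of_notMem (by simpa using h :
        n ∉ Eᶜ), add_zero]
      exact le_add_of_le_of_nonneg le_rfl (norm_nonneg x)
    · simp only [Set.indicator_of_notMem h, Set.indicator_of_mem (by simpa using h :
        n ∈ Eᶜ), zero_add]
      calc |x n| ≤ ‖x‖ := by simpa [Real.norm_eq_abs] using x.norm_coe_le_norm n
      _ ≤ |k| + ‖x‖ := le_add_of_nonneg_left (abs_nonneg k))

/-- The exponential discounted sum `(1-δ) ∑ δ^t x_t` (convention `0^0 = 1`). -/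
def discSum (δ : ℝ) (x : Linf) : ℝ := (1 - δ) * ∑' t, δ ^ t * x t

/-! ### Axioms -/

/-- The strict (asymmetric) part of a relation. -/
def SPref (R : Linf → Linf → Prop) (x y : Linf) : Prop := R x y ∧ ¬ R y x

/-- (A1) Weak order: complete and transitive. -/
def A1 (R : Linf → Linf → Prop) : Prop :=
  (∀ x y, R x y ∨ R y x) ∧ ∀ x y z, R x y → R y z → R x z

/-- (A2) Monotonicity. -/
def A2 (R : Linf → Linf → Prop) : Prop :=
  (∀ x y : Linf, (∀ n, y n ≤ x n) → R x y) ∧ SPref R (cst 1) (cst 0)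

/-- (A3) Continuity. -/
def A3 (R : Linf → Linf → Prop) : Prop := ∀ x y z : Linf,
  IsClosed {α : ℝ | α ∈ Set.Icc (0 : ℝ) 1 ∧ R (α • x + (1 - α) • z) y} ∧
  IsClosed {α : ℝ | α ∈ Set.Icc (0 : ℝ) 1 ∧ R y (α • x + (1 - α) • z)}

/-- (A4) Invariance with respect to a common reference point. -/
def A4 (R : Linf → Linf → Prop) : Prop :=
  ∀ x y : Linf, ∀ θ : ℝ, R x y → R (x + cst θ) (y + cst θ)

/-- (A5) Convexity. -/
def A5 (R : Linf → Linf → Prop) : Prop :=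
  ∀ x y : Linf, ∀ θ lam : ℝ, lam ∈ Set.Icc (0 : ℝ) 1 →
    R x (cst θ) → R y (cst θ) → R (lam • x + (1 - lam) • y) (cst θ)

/-- Axioms (A1)-(A5) together. -/
def A15 (R : Linf → Linf → Prop) : Prop := A1 R ∧ A2 R ∧ A3 R ∧ A4 R ∧ A5 R

/-- (MC) Monotone continuity. -/
def MC (R : Linf → Linf → Prop) : Prop :=
  ∀ (x : Linf) (θ : ℝ), SPref R x (cst θ) →
    ∀ E : ℕ → Set ℕ, (∀ n, E (n + 1) ⊆ E n) → (⋂ n, E n) = ∅ →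
      ∀ k : ℝ, ∃ n₀ : ℕ, SPref R (patch k (E n₀) x) (cst θ)

/-- (IDIS) Invariance with respect to delaying improving sequences. -/
def IDIS (R : Linf → Linf → Prop) : Prop :=
  ∀ x d : Linf, R (x + d) x → R (x + delaySeq d) x

/-- (ISU) Invariance with respect to the scale of utils. -/
def ISU (R : Linf → Linf → Prop) : Prop :=
  ∀ x y : Linf, ∀ α : ℝ, 0 ≤ α → R x y → R (α • x) (α • y)

/-- (IOU) Invariance with respect to individual origins of utilities. -/
def IOU (R : Linf → Linf → Prop) : Prop :=
  ∀ x y z : Linf, (R x y ∧ R y x) → (R (x + z) (y + z) ∧ R (y + z) (x + z))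

/-- Strong monotonicity. -/
def StrongMono (R : Linf → Linf → Prop) : Prop :=
  (∀ x y : Linf, (∀ n, y n ≤ x n) → R x y) ∧
  ∀ x y : Linf, (∀ n, y n ≤ x n) → x ≠ y → SPref R x y

/-- (ITIS) Invariance with respect to applying `T` to improving sequences. -/
def ITIS (T : Linf → Linf) (R : Linf → Linf → Prop) : Prop :=
  ∀ x d : Linf, R (x + d) x → R (x + T d) x

/-- Time invariance: `x ∼ (x₁, x₂, x₃, ...)`. -/
def TimeInv (R : Linf → Linf → Prop) : Prop :=
  ∀ x : Linf, R x (shiftSeq x) ∧ R (shiftSeq x) x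

/-- `I` is a constant equivalent for `≿`: `x ∼ I(x)` for every `x`. -/
def ConstEquiv (R : Linf → Linf → Prop) (I : Linf → ℝ) : Prop :=
  ∀ x, R x (cst (I x)) ∧ R (cst (I x)) x

/-- `I` represents `≿`: `x ≿ y ↔ I(x) ≥ I(y)`. -/
def Represents (R : Linf → Linf → Prop) (I : Linf → ℝ) : Prop :=
  ∀ x y, R x y ↔ I y ≤ I x

/-! ### Discount structures -/

/-- A functional `p ∈ ba(ℕ)` is positive. -/
def IsPos (p : Ba) : Prop := ∀ x : Linf, (∀ n, 0 ≤ x n) → 0 ≤ p x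

/-- `Δ`: the set of discount structures. -/
def Delta : Set Ba := {p | IsPos p ∧ p (cst 1) = 1}

/-- `Δ^σ`: countably additive discount structures. -/
def DeltaSigma : Set Ba :=
  {p ∈ Delta | ∃ f : ℕ → ℝ, (∀ n, 0 ≤ f n) ∧ Summable f ∧ (∑' n, f n) = 1 ∧
    ∀ x : Linf, p x = ∑' n, f n * x n}

/-- `ℬ`: the set of Banach–Mazur limits. -/
def BM : Set Ba := {p ∈ Delta | ∀ x : Linf, p (shiftSeq x) = p x}

/-- The exponential discounting functionals with parameter `δ ∈ [0,1)`. -/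
def Geom : Set Ba := {p | ∃ δ ∈ Set.Ico (0 : ℝ) 1, ∀ x : Linf, p x = discSum δ x}

/-- `Δ(T*)`: discount structures that are eigenvectors of the adjoint of `T`,
expressed via the duality `⟨T x, p⟩ = λ ⟨x, p⟩`. -/
def DeltaT (T : Linf → Linf) : Set Ba :=
  {p ∈ Delta | ∃ lam : ℝ, ∀ x : Linf, p (T x) = lam * p x}

/-- A map `T : l∞ → l∞` is positive. -/
def PosMap (T : Linf → Linf) : Prop :=
  ∀ x : Linf, (∀ n, 0 ≤ x n) → ∀ n, 0 ≤ T x n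

/-- `ca(ℕ)`: countably additive elements of `ba(ℕ)`. -/
def caSet : Set Ba :=
  {μ | ∀ A : ℕ → Set ℕ, (∀ n, A (n + 1) ⊆ A n) → (⋂ n, A n) = ∅ →
    Filter.Tendsto (fun n => μ (indic (A n))) Filter.atTop (nhds 0)}

/-- `pa(ℕ)`: purely finitely additive elements of `ba(ℕ)`. -/
def paSet : Set Ba := {μ | ∀ n : ℕ, μ (indic {n}) = 0}

/-- `c` is grounded on `D`. -/
def Grounded (D : Set Ba) (c : Ba → ℝ≥0∞) : Prop := (⨅ p ∈ D, c p) = 0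

/-- `c` is grounded on `[0,1]`. -/
def Grounded01 (c : ℝ → ℝ≥0∞) : Prop := (⨅ δ ∈ Set.Icc (0 : ℝ) 1, c δ) = 0

/-- Maxmin form: `I(x) = min_{p ∈ D} ⟨x,p⟩`, the minimum being attained. -/
def MinForm (D : Set Ba) (I : Linf → ℝ) : Prop :=
  ∀ x, (∃ p ∈ D, I x = p x) ∧ ∀ p ∈ D, I x ≤ p x

/-- Variational form: `I(x) = min_{p ∈ D} {⟨x,p⟩ + c(p)}`, the minimum being attained. -/
def VarMinForm (D : Set Ba) (c : Ba → ℝ≥0∞) (I : Linf → ℝ) : Prop :=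
  ∀ x, (∃ p ∈ D, (I x : EReal) = (p x : EReal) + (c p : EReal)) ∧
    ∀ p ∈ D, (I x : EReal) ≤ (p x : EReal) + (c p : EReal)

/-- Maxmin discounting form over a set of discount factors `E ⊆ [0,1)`. -/
def MinDelta (E : Set ℝ) (I : Linf → ℝ) : Prop :=
  ∀ x, (∃ δ ∈ E, I x = discSum δ x) ∧ ∀ δ ∈ E, I x ≤ discSum δ x

/-- Variational discounting form over discount factors. -/
def VarMinDelta (E : Set ℝ) (c : ℝ → ℝ≥0∞) (I : Linf → ℝ) : Prop :=
  ∀ x, (∃ δ ∈ E, (I x : EReal) = (discSum δ x : EReal) + (c δ : EReal)) ∧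
    ∀ δ ∈ E, (I x : EReal) ≤ (discSum δ x : EReal) + (c δ : EReal)

/-- Convexity for `ℝ≥0∞`-valued functions on a subset of `ba(ℕ)`. -/
def ConvexENN (D : Set Ba) (g : Ba → ℝ≥0∞) : Prop :=
  ∀ p ∈ D, ∀ q ∈ D, ∀ a b : ℝ, 0 ≤ a → 0 ≤ b → a + b = 1 →
    g (a • p + b • q) ≤ ENNReal.ofReal a * g p + ENNReal.ofReal b * g q



/-! ### Helper lemmas -/

lemma cst_apply (θ : ℝ) (n : ℕ) : cst θ n = θ := rfl

lemma ofSeq_apply (f : ℕ → ℝ) (C : ℝ) (h : ∀ n, |f n| ≤ C) (n : ℕ) :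
    ofSeq f C h n = f n := rfl

lemma indic_apply_mem {A : Set ℕ} {n : ℕ} (h : n ∈ A) : indic A n = 1 := by
  simp [indic, ofSeq, BoundedContinuousFunction.ofNormedAddCommGroupDiscrete,
    Set.indicator_of_mem h]

lemma indic_apply_not_mem {A : Set ℕ} {n : ℕ} (h : n ∉ A) : indic A n = 0 := by
  simp [indic, ofSeq, BoundedContinuousFunction.ofNormedAddCommGroupDiscrete,
    Set.indicator_of_notMem h]

lemma abs_apply_le_norm (x : Linf) (n : ℕ) : |x n| ≤ ‖x‖ := by
  simpa [Real.norm_eq_abs] using x.norm_coe_le_norm n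

lemma cst_smul (c : ℝ) : cst c = c • cst 1 := by
  ext n; simp [cst]

lemma Ba.map_cst (p : Ba) (h1 : p (cst 1) = 1) (c : ℝ) : p (cst c) = c := by
  rw [cst_smul, map_smul, h1, smul_eq_mul, mul_one]

lemma IsPos.mono {p : Ba} (hp : IsPos p) {x y : Linf} (h : ∀ n, x n ≤ y n) :
    p x ≤ p y := by
  have h0 : 0 ≤ p (y - x) := hp _ (fun n => by
    have := h n; simp only [BoundedContinuousFunction.coe_sub, Pi.sub_apply]; linarith)
  have : p (y - x) = p y - p x := map_sub p y x
  linarith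

lemma IsPos.abs_eval_le {p : Ba} (hp : IsPos p) (h1 : p (cst 1) = 1) (x : Linf) :
    |p x| ≤ ‖x‖ := by
  have hle : p x ≤ ‖x‖ := by
    have := hp.mono (x := x) (y := cst ‖x‖) (fun n => (_root_.abs_le.1 (abs_apply_le_norm x n)).2)
    rwa [Ba.map_cst p h1] at this
  have hge : -‖x‖ ≤ p x := by
    have := hp.mono (x := cst (-‖x‖)) (y := x) (fun n => by
      simpa [cst_apply] using (_root_.abs_le.1 (abs_apply_le_norm x n)).1)
    rwa [Ba.map_cst p h1] at this
  exact _root_.abs_le.2 ⟨hge, hle⟩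

lemma isClosed_Delta : IsClosed Delta := by
  have h1 : IsClosed {p : Ba | IsPos p} := by
    have : {p : Ba | IsPos p} =
        ⋂ x ∈ {x : Linf | ∀ n, 0 ≤ x n}, {p : Ba | 0 ≤ p x} := by
      ext p; simp [IsPos]
    rw [this]
    exact isClosed_biInter fun x hx =>
      isClosed_le continuous_const (WeakDual.eval_continuous x)
  have h2 : IsClosed {p : Ba | p (cst 1) = 1} :=
    isClosed_eq (WeakDual.eval_continuous (cst 1)) continuous_const
  exact h1.inter h2

lemma isCompact_of_sub_Delta {D : Set Ba} (hclosed : IsClosed D) (hD : D ⊆ Delta) :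
    IsCompact D := by
  refine IsCompact.of_isClosed_subset
    (WeakDual.isCompact_closedBall (𝕜 := ℝ) (E := Linf) 0 1) hclosed ?_
  intro p hp
  rcases hD hp with ⟨hpos, h1⟩
  simp only [Set.mem_preimage, Metric.mem_closedBall, dist_zero_right]
  exact ContinuousLinearMap.opNorm_le_bound _ zero_le_one (fun y => by
    simpa [Real.norm_eq_abs] using (hpos.abs_eval_le h1 y).trans (by simp))

lemma antitone_of_succ {E : ℕ → Set ℕ} (hE : ∀ n, E (n + 1) ⊆ E n) :
    ∀ {n m : ℕ}, n ≤ m → E m ⊆ E n := by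
  intro n m h
  induction h with
  | refl => exact subset_rfl
  | step h ih => exact (hE _).trans ih

lemma indic_le_indic {A B : Set ℕ} (h : A ⊆ B) (n : ℕ) : indic A n ≤ indic B n := by
  by_cases hn : n ∈ A
  · rw [indic_apply_mem hn, indic_apply_mem (h hn)]
  · rw [indic_apply_not_mem hn]
    by_cases hb : n ∈ B
    · rw [indic_apply_mem hb]; norm_num
    · rw [indic_apply_not_mem hb]

lemma indic_nonneg (A : Set ℕ) (n : ℕ) : 0 ≤ indic A n := by
  by_cases hn : n ∈ A
  · rw [indic_apply_mem hn]; norm_num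
  · rw [indic_apply_not_mem hn]

/-- The coefficients in a countably additive representation are the values on singletons. -/
lemma rep_coeff {p : Ba} {f : ℕ → ℝ} (hrep : ∀ x : Linf, p x = ∑' n, f n * x n)
    (n : ℕ) : p (indic {n}) = f n := by
  rw [hrep]
  rw [tsum_eq_single n (fun m hm => by
    rw [indic_apply_not_mem (by simpa using hm), mul_zero])]
  rw [indic_apply_mem (Set.mem_singleton n), mul_one]

lemma tail_tendsto {p : Ba} (hp : p ∈ DeltaSigma) {E : ℕ → Set ℕ}
    (hdec : ∀ n, E (n + 1) ⊆ E n) (hempty : (⋂ n, E n) = ∅) :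
    Filter.Tendsto (fun n => p (indic (E n))) Filter.atTop (nhds 0) := by
  obtain ⟨⟨hpos, h1⟩, f, hf0, hfsum, hftot, hrep⟩ := hp
  have key : ∀ m : ℕ, ∃ n₀, ∀ n ≥ n₀, m ∉ E n := by
    intro m
    have : m ∉ ⋂ n, E n := by rw [hempty]; exact Set.notMem_empty m
    rw [Set.mem_iInter] at this
    push_neg at this
    obtain ⟨n₀, hn₀⟩ := this
    exact ⟨n₀, fun n hn hmem => hn₀ (antitone_of_succ hdec hn hmem)⟩
  have : Filter.Tendsto (fun n => ∑' m, f m * indic (E n) m) Filter.atTop (nhds (∑' _ : ℕ, (0:ℝ))) := by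
    apply tendsto_tsum_of_dominated_convergence hfsum
    · intro m
      obtain ⟨n₀, hn₀⟩ := key m
      apply Filter.Tendsto.congr' _ tendsto_const_nhds
      filter_upwards [Filter.eventually_ge_atTop n₀] with n hn
      rw [indic_apply_not_mem (hn₀ n hn), mul_zero]
    · filter_upwards with n m
      rw [Real.norm_eq_abs, abs_mul, abs_of_nonneg (hf0 m)]
      by_cases hm : m ∈ E n
      · rw [indic_apply_mem hm]; simp
      · rw [indic_apply_not_mem hm]; simp [hf0 m]
  simp only [tsum_zero] at this
  exact this.congr (fun n => (hrep (indic (E n))).symm)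

/-- Uniform smallness of tails over a compact set of countably additive measures. -/
lemma uniform_tail {D : Set Ba} (hcomp : IsCompact D) (hD : D ⊆ DeltaSigma)
    {E : ℕ → Set ℕ} (hdec : ∀ n, E (n + 1) ⊆ E n) (hempty : (⋂ n, E n) = ∅)
    {ε : ℝ} (hε : 0 < ε) : ∃ n₀, ∀ p ∈ D, p (indic (E n₀)) < ε := by
  have hcover : D ⊆ ⋃ n : ℕ, {p : Ba | p (indic (E n)) < ε} := by
    intro p hp
    have := tail_tendsto (hD hp) hdec hempty
    have := (this.eventually (Filter.Tendsto.eventually_lt_const hε Filter.tendsto_id)).exists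
    · simpa using this
  obtain ⟨s, hs⟩ := hcomp.elim_finite_subcover _
    (fun n => isOpen_lt (WeakDual.eval_continuous _) continuous_const) hcover
  rcases s.eq_empty_or_nonempty with rfl | hne
  · refine ⟨0, fun p hp => ?_⟩
    have := hs hp; simp at this
  obtain ⟨n₀, hn₀⟩ := s.exists_max_image id hne
  refine ⟨n₀, fun p hp => ?_⟩
  obtain ⟨i, hi, hpi⟩ := by simpa using hs hp
  have hle : p (indic (E n₀)) ≤ p (indic (E i)) :=
    (hD hp).1.1.mono (indic_le_indic (antitone_of_succ hdec (hn₀.2 i hi)) )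
  exact lt_of_le_of_lt hle hpi

lemma patch_apply_mem {k : ℝ} {E : Set ℕ} {x : Linf} {n : ℕ} (h : n ∈ E) :
    patch k E x n = k := by
  have h' : n ∉ Eᶜ := by simpa using h
  simp [patch, ofSeq, BoundedContinuousFunction.ofNormedAddCommGroupDiscrete,
    Set.indicator_of_mem h, Set.indicator_of_notMem h']

lemma patch_apply_not_mem {k : ℝ} {E : Set ℕ} {x : Linf} {n : ℕ} (h : n ∉ E) :
    patch k E x n = x n := by
  have h' : n ∈ Eᶜ := by simpa using h
  simp [patch, ofSeq, BoundedContinuousFunction.ofNormedAddCommGroupDiscrete,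
    Set.indicator_of_notMem h, Set.indicator_of_mem h']

section MinFormFacts

variable {D : Set Ba} {I : Linf → ℝ}

lemma MinForm.le_eval (hI : MinForm D I) {p : Ba} (hp : p ∈ D) (x : Linf) :
    I x ≤ p x := (hI x).2 p hp

lemma MinForm.mono (hI : MinForm D I) (hD : D ⊆ Delta) {x y : Linf}
    (h : ∀ n, y n ≤ x n) : I y ≤ I x := by
  obtain ⟨p, hp, hpx⟩ := (hI x).1
  calc I y ≤ p y := (hI y).2 p hp
  _ ≤ p x := (hD hp).1.mono h
  _ = I x := hpx.symm

lemma MinForm.map_cst (hI : MinForm D I) (hD : D ⊆ Delta) (hne : D.Nonempty)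
    (θ : ℝ) : I (cst θ) = θ := by
  obtain ⟨p, hp, hpx⟩ := (hI (cst θ)).1
  rw [hpx, Ba.map_cst p (hD hp).2]

lemma MinForm.add_cst (hI : MinForm D I) (hD : D ⊆ Delta) (x : Linf) (θ : ℝ) :
    I (x + cst θ) = I x + θ := by
  have key : ∀ p : Ba, p ∈ D → p (x + cst θ) = p x + θ := fun p hp => by
    rw [map_add, Ba.map_cst p (hD hp).2]
  obtain ⟨p, hp, hpx⟩ := (hI x).1
  obtain ⟨q, hq, hqx⟩ := (hI (x + cst θ)).1
  have h1 : I (x + cst θ) ≤ I x + θ := by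
    rw [hpx, ← key p hp]; exact (hI _).2 p hp
  have h2 : I x + θ ≤ I (x + cst θ) := by
    rw [hqx, key q hq]
    have := (hI x).2 q hq; linarith
  linarith

lemma MinForm.smul (hI : MinForm D I) {α : ℝ} (hα : 0 ≤ α) (x : Linf) :
    I (α • x) = α * I x := by
  have key : ∀ p : Ba, p (α • x) = α * p x := fun p => by
    rw [map_smul, smul_eq_mul]
  obtain ⟨p, hp, hpx⟩ := (hI x).1
  obtain ⟨q, hq, hqx⟩ := (hI (α • x)).1
  have h1 : I (α • x) ≤ α * I x := by
    rw [hpx, ← key p]; exact (hI _).2 p hp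
  have h2 : α * I x ≤ I (α • x) := by
    rw [hqx, key q]
    exact mul_le_mul_of_nonneg_left ((hI x).2 q hq) hα
  linarith

lemma MinForm.lipschitz (hI : MinForm D I) (hD : D ⊆ Delta) (hne : D.Nonempty)
    (x y : Linf) : |I x - I y| ≤ ‖x - y‖ := by
  have key : ∀ u v : Linf, I u - I v ≤ ‖u - v‖ := by
    intro u v
    have h1 : I u ≤ I (v + cst ‖u - v‖) := by
      apply hI.mono hD
      intro n
      have := (abs_le.1 (abs_apply_le_norm (u - v) n)).2
      have huv : (u - v) n = u n - v n := rfl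
      simp only [BoundedContinuousFunction.coe_add, Pi.add_apply, cst_apply]
      linarith
    rw [hI.add_cst hD v ‖u - v‖] at h1
    linarith
  have h2 := key x y
  have h3 := key y x
  rw [abs_sub_le_iff]
  constructor
  · exact h2
  · simpa [norm_sub_rev] using h3

lemma MinForm.continuous (hI : MinForm D I) (hD : D ⊆ Delta) (hne : D.Nonempty) :
    Continuous I := by
  apply (LipschitzWith.of_dist_le_mul (K := 1) (f := I) ?_).continuous
  intro x y
  rw [Real.dist_eq, NNReal.coe_one, one_mul]
  exact (hI.lipschitz hD hne x y).trans (by rw [dist_eq_norm])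

lemma MinForm.concave (hI : MinForm D I) {x y : Linf} {lam : ℝ}
    (h0 : 0 ≤ lam) (h1 : lam ≤ 1) :
    lam * I x + (1 - lam) * I y ≤ I (lam • x + (1 - lam) • y) := by
  obtain ⟨p, hp, hpx⟩ := (hI (lam • x + (1 - lam) • y)).1
  rw [hpx, map_add, map_smul, map_smul, smul_eq_mul, smul_eq_mul]
  have := (hI x).2 p hp
  have := (hI y).2 p hp
  have h1' : (0:ℝ) ≤ 1 - lam := by linarith
  nlinarith

end MinFormFacts

/-- Part (ii): a maxmin functional over eigen-discount structures satisfies all axioms. -/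
lemma part2_lemma (T : Linf → Linf) (hpos : PosMap T)
    (hF : ∀ p ∈ DeltaSigma ∩ DeltaT T, p (T (cst 1)) ≤ 1)
    (D : Set Ba) (hne : D.Nonempty) (hclosed : IsClosed D)
    (hsub : D ⊆ DeltaSigma ∩ DeltaT T) (I : Linf → ℝ) (hI : MinForm D I) :
    A15 (fun x y => I y ≤ I x) ∧ MC (fun x y => I y ≤ I x) ∧
      ISU (fun x y => I y ≤ I x) ∧ ITIS T (fun x y => I y ≤ I x) := by
  have hD : D ⊆ Delta := fun p hp => (hsub hp).1.1
  have hcomp : IsCompact D := isCompact_of_sub_Delta hclosed hD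
  have hIc : Continuous I := hI.continuous hD hne
  refine ⟨⟨⟨fun x y => le_total (I y) (I x), fun x y z h1 h2 => le_trans h2 h1⟩,
    ⟨fun x y h => hI.mono hD h, ?_⟩, ?_, ?_, ?_⟩, ?_, ?_, ?_⟩
  · -- SPref R (cst 1) (cst 0)
    constructor
    · show I (cst 0) ≤ I (cst 1)
      rw [hI.map_cst hD hne, hI.map_cst hD hne]; norm_num
    · show ¬ I (cst 1) ≤ I (cst 0)
      rw [hI.map_cst hD hne, hI.map_cst hD hne]; norm_num
  · -- A3
    intro x y z
    have hg : Continuous fun α : ℝ => I (α • x + (1 - α) • z) := by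
      apply hIc.comp
      exact ((continuous_id.smul continuous_const).add
        ((continuous_const.sub continuous_id).smul continuous_const))
    constructor
    · exact (isClosed_Icc).inter (isClosed_le continuous_const hg)
    · exact (isClosed_Icc).inter (isClosed_le hg continuous_const)
  · -- A4
    intro x y θ h
    rw [hI.add_cst hD, hI.add_cst hD]
    linarith
  · -- A5
    intro x y θ lam hlam hx hy
    rw [hI.map_cst hD hne] at hx hy ⊢
    have := hI.concave (x := x) (y := y) hlam.1 hlam.2
    nlinarith [hlam.1, hlam.2]
  · -- MC
    intro x θ hxθ E hdec hempty k
    obtain ⟨hθle, hθlt⟩ := hxθ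
    have hθle' : I (cst θ) ≤ I x := hθle
    have hθ : θ < I x := by
      rw [hI.map_cst hD hne] at hθle'
      rcases lt_or_eq_of_le hθle' with h | h
      · exact h
      · exfalso; exact hθlt (by
          show I x ≤ I (cst θ)
          rw [hI.map_cst hD hne]; linarith)
    obtain ⟨M, hM⟩ : ∃ M : ℝ, M = |k| + ‖x‖ := ⟨_, rfl⟩
    have hM0 : 0 ≤ M := by rw [hM]; positivity
    have hε : (0:ℝ) < (I x - θ) / (2 * (M + 1)) := by
      apply div_pos (by linarith) (by linarith)
    obtain ⟨n₀, hn₀⟩ := uniform_tail hcomp (fun p hp => (hsub hp).1) hdec hempty hε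
    have hkey : θ < I (patch k (E n₀) x) := by
      have hpt : ∀ n, (x - M • indic (E n₀)) n ≤ patch k (E n₀) x n := by
        intro n
        have hxn := abs_le.1 (abs_apply_le_norm x n)
        by_cases hn : n ∈ E n₀
        · rw [patch_apply_mem hn]
          have : (x - M • indic (E n₀)) n = x n - M * indic (E n₀) n := rfl
          rw [this, indic_apply_mem hn, mul_one]
          have := neg_abs_le k
          rw [hM]
          linarith [hxn.2]
        · rw [patch_apply_not_mem hn]
          have : (x - M • indic (E n₀)) n = x n - M * indic (E n₀) n := rfl
          rw [this, indic_apply_not_mem hn, mul_zero]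
          linarith
      have h1 : I (x - M • indic (E n₀)) ≤ I (patch k (E n₀) x) := hI.mono hD hpt
      obtain ⟨p, hp, hpx⟩ := (hI (x - M • indic (E n₀))).1
      have h2 : p (x - M • indic (E n₀)) = p x - M * p (indic (E n₀)) := by
        rw [map_sub, map_smul, smul_eq_mul]
      have h3 : p (indic (E n₀)) < (I x - θ) / (2 * (M + 1)) := hn₀ p hp
      have h4 : 0 ≤ p (indic (E n₀)) := (hD hp).1 _ (indic_nonneg _)
      have h5 : I x ≤ p x := (hI x).2 p hp
      have h6 : M * p (indic (E n₀)) ≤ M * ((I x - θ) / (2 * (M + 1))) := by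
        rcases eq_or_lt_of_le hM0 with h | h
        · rw [← h]; simp
        · exact le_of_lt (mul_lt_mul_of_pos_left h3 h)
      have h7 : M * ((I x - θ) / (2 * (M + 1))) < I x - θ := by
        rw [div_eq_inv_mul]
        have hlt : M / (2 * (M + 1)) < 1 / 2 := by
          rw [div_lt_div_iff₀ (by linarith) (by norm_num)]
          linarith
        have : M * ((2 * (M + 1))⁻¹ * (I x - θ)) = (M / (2 * (M + 1))) * (I x - θ) := by
          ring
        rw [this]
        nlinarith [hlt, sub_pos.2 hθ]
      linarith [h1, hpx, h2, h5, h6, h7]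
    refine ⟨n₀, ?_, ?_⟩
    · show I (cst θ) ≤ I (patch k (E n₀) x)
      rw [hI.map_cst hD hne]; linarith
    · show ¬ I (patch k (E n₀) x) ≤ I (cst θ)
      rw [hI.map_cst hD hne]; linarith
  · -- ISU
    intro x y α hα h
    rw [hI.smul hα, hI.smul hα]
    exact mul_le_mul_of_nonneg_left h hα
  · -- ITIS
    intro x d h
    obtain ⟨p, hp, hpx⟩ := (hI (x + T d)).1
    obtain ⟨hpΔσ, hpΔ, lam, hlam⟩ := hsub hp
    have hlam1 : lam = p (T (cst 1)) := by
      rw [hlam (cst 1), Ba.map_cst p hpΔ.2, mul_one]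
    have hlam0 : 0 ≤ lam := by
      rw [hlam1]
      exact hpΔ.1 _ (fun n => hpos (cst 1) (fun m => by rw [cst_apply]; norm_num) n)
    have hlamle : lam ≤ 1 := by
      rw [hlam1]
      exact hF p ⟨hpΔσ, hpΔ, lam, hlam⟩
    rw [hpx, map_add, hlam d]
    have hIx : I x ≤ p x := (hI x).2 p hp
    rcases le_or_gt 0 (p d) with hd | hd
    · nlinarith
    · have h2 : p d ≤ lam * p d := by
        nlinarith [mul_nonneg (sub_nonneg.2 hlamle) (neg_nonneg.2 hd.le)]
      have h3 : I x ≤ I (x + d) := h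
      have h4 : I (x + d) ≤ p (x + d) := (hI (x + d)).2 p hp
      rw [map_add] at h4
      linarith

/-! ### Part (i): constructing the representation -/

lemma cst_add (a b : ℝ) : cst a + cst b = cst (a + b) := by ext n; simp [cst]

lemma smul_cst (α a : ℝ) : α • cst a = cst (α * a) := by ext n; simp [cst]

lemma cst_combo (α a b : ℝ) : α • cst a + (1 - α) • cst b = cst (α * a + (1 - α) * b) := by
  ext n; simp [cst]; try ring

lemma neg_cst (a : ℝ) : -cst a = cst (-a) := by ext n; simp [cst]

lemma zero_eq_cst : (0 : Linf) = cst 0 := by ext n; simp [cst]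

section Rbasics

variable {R : Linf → Linf → Prop}

lemma R_trans (hA1 : A1 R) {x y z : Linf} (h1 : R x y) (h2 : R y z) : R x z :=
  hA1.2 x y z h1 h2

lemma R_total (hA1 : A1 R) (x y : Linf) : R x y ∨ R y x := hA1.1 x y

lemma R_cst_mono (hA2 : A2 R) {a b : ℝ} (h : b ≤ a) : R (cst a) (cst b) :=
  hA2.1 _ _ (fun n => by rw [cst_apply, cst_apply]; exact h)

/-- Constants are strictly ranked. -/
lemma R_cst_strict (hA2 : A2 R) (hA4 : A4 R) (hISU : ISU R) {a b : ℝ} (h : b < a) :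
    ¬ R (cst b) (cst a) := by
  intro hR
  have h1 : R (cst b + cst (-b)) (cst a + cst (-b)) := hA4 _ _ (-b) hR
  rw [cst_add, cst_add, add_neg_cancel] at h1
  have hab : a + -b = a - b := by ring
  rw [hab] at h1
  have h2 : R ((a - b)⁻¹ • cst 0) ((a - b)⁻¹ • cst (a - b)) :=
    hISU _ _ _ (le_of_lt (inv_pos.2 (by linarith))) h1
  rw [smul_cst, smul_cst, mul_zero, inv_mul_cancel₀ (by linarith : a - b ≠ 0)] at h2
  exact hA2.2.2 h2

/-- A closed-slice lemma for lower sets, from (A3). -/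
lemma closed_slice_low (hA3 : A3 R) (x : Linf) (a b : ℝ) :
    IsClosed {θ : ℝ | θ ∈ Set.Icc b a ∧ R x (cst θ)} := by
  rcases lt_or_ge b a with hba | hba
  · have hS := (hA3 (cst a) x (cst b)).2
    have hab' : (0:ℝ) < a - b := by linarith
    have key : {θ : ℝ | θ ∈ Set.Icc b a ∧ R x (cst θ)} = (fun θ => (θ - b) / (a - b)) ⁻¹'
        {α : ℝ | α ∈ Set.Icc (0:ℝ) 1 ∧ R x (α • cst a + (1 - α) • cst b)} := by
      ext θ
      simp only [Set.mem_preimage, Set.mem_setOf_eq, Set.mem_Icc, cst_combo]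
      have hcst : (θ - b) / (a - b) * a + (1 - (θ - b) / (a - b)) * b = θ := by
        field_simp; ring
      rw [hcst]
      constructor
      · rintro ⟨⟨h1, h2⟩, hR⟩
        exact ⟨⟨div_nonneg (by linarith) hab'.le, by rw [div_le_one hab']; linarith⟩, hR⟩
      · rintro ⟨⟨h1, h2⟩, hR⟩
        rw [div_le_one hab'] at h2
        have h1' : 0 ≤ θ - b := by
          by_contra hc
          push_neg at hc
          have := div_neg_of_neg_of_pos (by linarith : θ - b < 0) hab'
          linarith
        exact ⟨⟨by linarith, by linarith⟩, hR⟩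
    rw [key]
    exact hS.preimage (by continuity)
  · rcases eq_or_lt_of_le hba with heq | hlt
    · apply Set.Subsingleton.isClosed
      intro u hu v hv
      have hu' : u = a := le_antisymm hu.1.2 (heq ▸ hu.1.1)
      have hv' : v = a := le_antisymm hv.1.2 (heq ▸ hv.1.1)
      rw [hu', hv']
    · have : {θ : ℝ | θ ∈ Set.Icc b a ∧ R x (cst θ)} = ∅ := by
        ext θ
        simp only [Set.mem_setOf_eq, Set.mem_Icc, Set.mem_empty_iff_false, iff_false]
        rintro ⟨⟨h1, h2⟩, _⟩; linarith
      rw [this]; exact isClosed_empty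

/-- A closed-slice lemma for upper sets, from (A3). -/
lemma closed_slice_high (hA3 : A3 R) (x : Linf) (a b : ℝ) :
    IsClosed {θ : ℝ | θ ∈ Set.Icc b a ∧ R (cst θ) x} := by
  rcases lt_or_ge b a with hba | hba
  · have hS := (hA3 (cst a) x (cst b)).1
    have hab' : (0:ℝ) < a - b := by linarith
    have key : {θ : ℝ | θ ∈ Set.Icc b a ∧ R (cst θ) x} = (fun θ => (θ - b) / (a - b)) ⁻¹'
        {α : ℝ | α ∈ Set.Icc (0:ℝ) 1 ∧ R (α • cst a + (1 - α) • cst b) x} := by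
      ext θ
      simp only [Set.mem_preimage, Set.mem_setOf_eq, Set.mem_Icc, cst_combo]
      have hcst : (θ - b) / (a - b) * a + (1 - (θ - b) / (a - b)) * b = θ := by
        field_simp; ring
      rw [hcst]
      constructor
      · rintro ⟨⟨h1, h2⟩, hR⟩
        exact ⟨⟨div_nonneg (by linarith) hab'.le, by rw [div_le_one hab']; linarith⟩, hR⟩
      · rintro ⟨⟨h1, h2⟩, hR⟩
        rw [div_le_one hab'] at h2
        have h1' : 0 ≤ θ - b := by
          by_contra hc
          push_neg at hc
          have := div_neg_of_neg_of_pos (by linarith : θ - b < 0) hab'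
          linarith
        exact ⟨⟨by linarith, by linarith⟩, hR⟩
    rw [key]
    exact hS.preimage (by continuity)
  · rcases eq_or_lt_of_le hba with heq | hlt
    · apply Set.Subsingleton.isClosed
      intro u hu v hv
      have hu' : u = a := le_antisymm hu.1.2 (heq ▸ hu.1.1)
      have hv' : v = a := le_antisymm hv.1.2 (heq ▸ hv.1.1)
      rw [hu', hv']
    · have : {θ : ℝ | θ ∈ Set.Icc b a ∧ R (cst θ) x} = ∅ := by
        ext θ
        simp only [Set.mem_setOf_eq, Set.mem_Icc, Set.mem_empty_iff_false, iff_false]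
        rintro ⟨⟨h1, h2⟩, _⟩; linarith
      rw [this]; exact isClosed_empty

/-- The set of constants weakly dominated by `x`, within a large interval. -/
def lowSet (R : Linf → Linf → Prop) (x : Linf) : Set ℝ :=
  {θ | θ ∈ Set.Icc (-‖x‖ - 1) (‖x‖ + 1) ∧ R x (cst θ)}

/-- The constant-equivalent functional derived from `R`. -/
def IofR (R : Linf → Linf → Prop) : Linf → ℝ := fun x => sSup (lowSet R x)

lemma lowSet_mem_neg_norm (hA2 : A2 R) (x : Linf) : -‖x‖ ∈ lowSet R x := by
  refine ⟨Set.mem_Icc.2 ⟨by linarith, by linarith [norm_nonneg x]⟩, ?_⟩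
  exact hA2.1 _ _ (fun n => by
    rw [cst_apply]; linarith [(abs_le.1 (abs_apply_le_norm x n)).1])

lemma lowSet_nonempty (hA2 : A2 R) (x : Linf) : (lowSet R x).Nonempty :=
  ⟨-‖x‖, lowSet_mem_neg_norm hA2 x⟩

lemma lowSet_le_norm (hA1 : A1 R) (hA2 : A2 R) (hA4 : A4 R) (hISU : ISU R) (x : Linf) :
    ∀ θ ∈ lowSet R x, θ ≤ ‖x‖ := by
  intro θ ⟨_, hR⟩
  by_contra hgt
  push_neg at hgt
  have h1 : R (cst ‖x‖) x := hA2.1 _ _ (fun n => by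
    rw [cst_apply]; exact (abs_le.1 (abs_apply_le_norm x n)).2)
  have h2 : R (cst ‖x‖) (cst θ) := R_trans hA1 h1 hR
  exact R_cst_strict hA2 hA4 hISU hgt h2

lemma lowSet_bddAbove (hA1 : A1 R) (hA2 : A2 R) (hA4 : A4 R) (hISU : ISU R) (x : Linf) :
    BddAbove (lowSet R x) := ⟨‖x‖, fun θ hθ => lowSet_le_norm hA1 hA2 hA4 hISU x θ hθ⟩

end Rbasics

section IofRFacts

variable {R : Linf → Linf → Prop}

lemma IofR_constEquiv (hA1 : A1 R) (hA2 : A2 R) (hA3 : A3 R) (hA4 : A4 R)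
    (hISU : ISU R) (x : Linf) : R x (cst (IofR R x)) ∧ R (cst (IofR R x)) x := by
  have hne := lowSet_nonempty hA2 x
  have hbdd := lowSet_bddAbove hA1 hA2 hA4 hISU x
  set s := IofR R x with hs
  have hs_ub : s ≤ ‖x‖ := csSup_le hne (lowSet_le_norm hA1 hA2 hA4 hISU x)
  have hs_lb : -‖x‖ ≤ s := le_csSup hbdd (lowSet_mem_neg_norm hA2 x)
  constructor
  · have hclosed : IsClosed (lowSet R x) := closed_slice_low hA3 x (‖x‖ + 1) (-‖x‖ - 1)
    have : s ∈ lowSet R x := by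
      have := csSup_mem_closure hne hbdd
      rwa [hclosed.closure_eq] at this
    exact this.2
  · have hclosed : IsClosed {θ : ℝ | θ ∈ Set.Icc (-‖x‖ - 1) (‖x‖ + 1) ∧ R (cst θ) x} :=
      closed_slice_high hA3 x (‖x‖ + 1) (-‖x‖ - 1)
    have hsub : Set.Ioc s (‖x‖ + 1) ⊆
        {θ : ℝ | θ ∈ Set.Icc (-‖x‖ - 1) (‖x‖ + 1) ∧ R (cst θ) x} := by
      rintro θ ⟨h1, h2⟩
      refine ⟨Set.mem_Icc.2 ⟨by linarith, h2⟩, ?_⟩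
      rcases R_total hA1 x (cst θ) with hR | hR
      · exfalso
        have hmem : θ ∈ lowSet R x := ⟨Set.mem_Icc.2 ⟨by linarith, h2⟩, hR⟩
        have hθs : θ ≤ s := le_csSup hbdd hmem
        linarith
      · exact hR
    have hsne : s < ‖x‖ + 1 := by linarith
    have hmem : s ∈ closure (Set.Ioc s (‖x‖ + 1)) := by
      rw [closure_Ioc (ne_of_lt hsne)]
      exact ⟨le_refl s, le_of_lt hsne⟩
    have : s ∈ {θ : ℝ | θ ∈ Set.Icc (-‖x‖ - 1) (‖x‖ + 1) ∧ R (cst θ) x} := by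
      have := (closure_mono hsub) hmem
      rwa [hclosed.closure_eq] at this
    exact this.2

lemma IofR_represents (hA1 : A1 R) (hA2 : A2 R) (hA3 : A3 R) (hA4 : A4 R)
    (hISU : ISU R) : Represents R (IofR R) := by
  intro x y
  have hx := IofR_constEquiv hA1 hA2 hA3 hA4 hISU x
  have hy := IofR_constEquiv hA1 hA2 hA3 hA4 hISU y
  constructor
  · intro hR
    by_contra hlt
    push_neg at hlt
    have h1 : R (cst (IofR R x)) (cst (IofR R y)) :=
      R_trans hA1 (R_trans hA1 hx.2 hR) hy.1
    exact R_cst_strict hA2 hA4 hISU hlt h1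
  · intro hle
    exact R_trans hA1 (R_trans hA1 hx.1 (R_cst_mono hA2 hle)) hy.2

lemma IofR_cst (hA1 : A1 R) (hA2 : A2 R) (hA3 : A3 R) (hA4 : A4 R)
    (hISU : ISU R) (θ : ℝ) : IofR R (cst θ) = θ := by
  have h := IofR_constEquiv hA1 hA2 hA3 hA4 hISU (cst θ)
  have h1 : ¬ θ < IofR R (cst θ) := fun hlt => R_cst_strict hA2 hA4 hISU hlt h.1
  have h2 : ¬ IofR R (cst θ) < θ := fun hlt => R_cst_strict hA2 hA4 hISU hlt h.2
  linarith [lt_or_ge θ (IofR R (cst θ)), not_lt.1 h1, not_lt.1 h2]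

lemma IofR_eq_of_equiv (hA1 : A1 R) (hA2 : A2 R) (hA3 : A3 R) (hA4 : A4 R)
    (hISU : ISU R) {z : Linf} {c : ℝ} (h1 : R z (cst c)) (h2 : R (cst c) z) :
    IofR R z = c := by
  have hrep := IofR_represents hA1 hA2 hA3 hA4 hISU
  have ha := (hrep z (cst c)).1 h1
  have hb := (hrep (cst c) z).1 h2
  rw [IofR_cst hA1 hA2 hA3 hA4 hISU] at ha hb
  linarith

lemma IofR_mono (hA1 : A1 R) (hA2 : A2 R) (hA3 : A3 R) (hA4 : A4 R)
    (hISU : ISU R) {x y : Linf} (h : ∀ n, y n ≤ x n) : IofR R y ≤ IofR R x :=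
  (IofR_represents hA1 hA2 hA3 hA4 hISU x y).1 (hA2.1 x y h)

lemma IofR_add_cst (hA1 : A1 R) (hA2 : A2 R) (hA3 : A3 R) (hA4 : A4 R)
    (hISU : ISU R) (x : Linf) (θ : ℝ) : IofR R (x + cst θ) = IofR R x + θ := by
  have h := IofR_constEquiv hA1 hA2 hA3 hA4 hISU x
  have h1 := hA4 _ _ θ h.1
  have h2 := hA4 _ _ θ h.2
  rw [cst_add] at h1 h2
  exact IofR_eq_of_equiv hA1 hA2 hA3 hA4 hISU h1 h2

lemma IofR_smul (hA1 : A1 R) (hA2 : A2 R) (hA3 : A3 R) (hA4 : A4 R)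
    (hISU : ISU R) {α : ℝ} (hα : 0 ≤ α) (x : Linf) :
    IofR R (α • x) = α * IofR R x := by
  have h := IofR_constEquiv hA1 hA2 hA3 hA4 hISU x
  have h1 := hISU _ _ α hα h.1
  have h2 := hISU _ _ α hα h.2
  rw [smul_cst] at h1 h2
  exact IofR_eq_of_equiv hA1 hA2 hA3 hA4 hISU h1 h2

lemma IofR_superadd (hA1 : A1 R) (hA2 : A2 R) (hA3 : A3 R) (hA4 : A4 R)
    (hA5 : A5 R) (hISU : ISU R) (x y : Linf) :
    IofR R x + IofR R y ≤ IofR R (x + y) := by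
  have hrep := IofR_represents hA1 hA2 hA3 hA4 hISU
  set x' := x + cst (-IofR R x) with hx'
  set y' := y + cst (-IofR R y) with hy'
  have hIx' : IofR R x' = 0 := by
    rw [hx', IofR_add_cst hA1 hA2 hA3 hA4 hISU]; ring
  have hIy' : IofR R y' = 0 := by
    rw [hy', IofR_add_cst hA1 hA2 hA3 hA4 hISU]; ring
  have hx0 : R x' (cst 0) := (hrep x' (cst 0)).2 (by
    rw [IofR_cst hA1 hA2 hA3 hA4 hISU, hIx'])
  have hy0 : R y' (cst 0) := (hrep y' (cst 0)).2 (by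
    rw [IofR_cst hA1 hA2 hA3 hA4 hISU, hIy'])
  have h5 := hA5 x' y' 0 (1/2) (Set.mem_Icc.2 ⟨by norm_num, by norm_num⟩) hx0 hy0
  have hcombo : (1/2 : ℝ) • x' + (1 - 1/2 : ℝ) • y' =
      (1/2 : ℝ) • (x + y) + cst (-(IofR R x + IofR R y)/2) := by
    ext n
    show (1/2 : ℝ) * x' n + (1 - 1/2 : ℝ) * y' n
      = (1/2 : ℝ) * (x + y) n + (-(IofR R x + IofR R y)/2)
    have hx'n : x' n = x n + (-IofR R x) := rfl
    have hy'n : y' n = y n + (-IofR R y) := rfl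
    have hxyn : (x + y) n = x n + y n := rfl
    rw [hx'n, hy'n, hxyn]; ring
  rw [hcombo] at h5
  have := (hrep _ (cst 0)).1 h5
  rw [IofR_cst hA1 hA2 hA3 hA4 hISU,
    IofR_add_cst hA1 hA2 hA3 hA4 hISU,
    IofR_smul hA1 hA2 hA3 hA4 hISU (by norm_num : (0:ℝ) ≤ 1/2)] at this
  linarith

lemma IofR_bounds (hA1 : A1 R) (hA2 : A2 R) (hA3 : A3 R) (hA4 : A4 R)
    (hISU : ISU R) (x : Linf) : -‖x‖ ≤ IofR R x ∧ IofR R x ≤ ‖x‖ := by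
  constructor
  · have := IofR_mono hA1 hA2 hA3 hA4 hISU (x := x) (y := cst (-‖x‖)) (fun n => by
      rw [cst_apply]; linarith [(abs_le.1 (abs_apply_le_norm x n)).1])
    rwa [IofR_cst hA1 hA2 hA3 hA4 hISU] at this
  · have := IofR_mono hA1 hA2 hA3 hA4 hISU (x := cst ‖x‖) (y := x) (fun n => by
      rw [cst_apply]; linarith [(abs_le.1 (abs_apply_le_norm x n)).2])
    rwa [IofR_cst hA1 hA2 hA3 hA4 hISU] at this

end IofRFacts

section HahnBanach

variable {I : Linf → ℝ}

/-- Hahn–Banach: a superlinear, monotone, normalized functional is dominated,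
with contact at any prescribed point. -/
lemma exists_dominating
    (hsuper : ∀ x y : Linf, I x + I y ≤ I (x + y))
    (hsmul : ∀ α : ℝ, 0 ≤ α → ∀ x : Linf, I (α • x) = α * I x)
    (hmono : ∀ x y : Linf, (∀ n, y n ≤ x n) → I y ≤ I x)
    (hcst : ∀ θ : ℝ, I (cst θ) = θ) (x₀ : Linf) :
    ∃ p : Ba, (IsPos p ∧ p (cst 1) = 1 ∧ ∀ y : Linf, I y ≤ p y) ∧ p x₀ = I x₀ := by
  have hI0 : I 0 = 0 := by rw [zero_eq_cst, hcst]
  have hIneg : ∀ x : Linf, I x + I (-x) ≤ 0 := fun x => by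
    have := hsuper x (-x)
    rwa [add_neg_cancel, hI0] at this
  have hIub : ∀ z : Linf, I z ≤ ‖z‖ := fun z => by
    have := hmono (cst ‖z‖) z (fun n => by
      rw [cst_apply]; exact (abs_le.1 (abs_apply_le_norm z n)).2)
    rwa [hcst] at this
  have hIlb : ∀ z : Linf, -‖z‖ ≤ I z := fun z => by
    have := hmono z (cst (-‖z‖)) (fun n => by
      rw [cst_apply]; linarith [(abs_le.1 (abs_apply_le_norm z n)).1])
    rwa [hcst] at this
  set N : Linf → ℝ := fun z => -I (-z) with hN
  have N_hom : ∀ c : ℝ, 0 < c → ∀ z : Linf, N (c • z) = c * N z := by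
    intro c hc z
    have : -(c • z) = c • (-z) := by rw [smul_neg]
    simp only [hN, this, hsmul c hc.le]
    ring
  have N_add : ∀ z w : Linf, N (z + w) ≤ N z + N w := by
    intro z w
    have : -(z + w) = (-z) + (-w) := by ring
    simp only [hN, this]
    have := hsuper (-z) (-w)
    linarith
  have key : ∀ x₀ : Linf, x₀ ≠ 0 →
      ∃ p : Ba, (IsPos p ∧ p (cst 1) = 1 ∧ ∀ y : Linf, I y ≤ p y) ∧ p x₀ = I x₀ := by
    intro x₀ hx0
    set f : Linf →ₗ.[ℝ] ℝ := LinearPMap.mkSpanSingleton x₀ (I x₀) hx0 with hf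
    have hdom : ∀ z : f.domain, f z ≤ N z := by
      rintro ⟨z, hz⟩
      obtain ⟨c, hc⟩ := Submodule.mem_span_singleton.1 hz
      have hzeq : (⟨z, hz⟩ : f.domain) = ⟨c • x₀, hc ▸ hz⟩ := Subtype.ext hc.symm
      rw [hzeq]
      have happ : f ⟨c • x₀, hc ▸ hz⟩ = c • I x₀ := LinearPMap.mkSpanSingleton'_apply _ _ _ c _
      rw [happ]
      show c • I x₀ ≤ N (c • x₀)
      rcases lt_trichotomy c 0 with hcneg | hczero | hcpos
      · have heq : c • x₀ = (-c) • (-x₀) := by rw [smul_neg, neg_smul, neg_neg]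
        rw [heq, N_hom (-c) (by linarith) (-x₀)]
        have : N (-x₀) = -I x₀ := by simp only [hN, neg_neg]
        rw [this]
        simp only [smul_eq_mul]
        nlinarith
      · subst hczero
        simp only [zero_smul, smul_eq_mul, zero_mul]
        simp only [hN, neg_zero, hI0]
        norm_num
      · rw [N_hom c hcpos]
        simp only [smul_eq_mul]
        have : I x₀ ≤ N x₀ := by
          have := hIneg x₀
          simp only [hN]; linarith
        nlinarith
    obtain ⟨g, hg1, hg2⟩ := exists_extension_of_le_sublinear f N N_hom N_add hdom
    have hgI : ∀ y : Linf, I y ≤ g y := by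
      intro y
      have h1 : g (-y) ≤ N (-y) := hg2 (-y)
      have h2 : g (-y) = -g y := map_neg g y
      simp only [hN, neg_neg] at h1
      linarith
    have hgbound : ∀ z : Linf, ‖g z‖ ≤ 1 * ‖z‖ := by
      intro z
      rw [Real.norm_eq_abs, one_mul, abs_le]
      constructor
      · have := hgI z
        linarith [hIlb z]
      · have := hg2 z
        have h2 : N z ≤ ‖z‖ := by
          simp only [hN]
          have := hIlb (-z)
          rw [norm_neg] at this
          linarith
        linarith
    set p : Ba := (LinearMap.mkContinuous g 1 hgbound : Linf →L[ℝ] ℝ) with hp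
    have hpapp : ∀ y : Linf, p y = g y := fun y => rfl
    refine ⟨p, ⟨?_, ?_, ?_⟩, ?_⟩
    · intro y hy
      rw [hpapp]
      have : I (cst 0) ≤ I y := hmono y (cst 0) (fun n => by rw [cst_apply]; exact hy n)
      rw [hcst] at this
      linarith [hgI y]
    · rw [hpapp]
      have h1 : I (cst 1) ≤ g (cst 1) := hgI (cst 1)
      have h2 : g (cst 1) ≤ N (cst 1) := hg2 (cst 1)
      have h3 : N (cst 1) = 1 := by
        simp only [hN, neg_cst, hcst]; norm_num
      rw [hcst] at h1
      linarith
    · exact hgI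
    · rw [hpapp]
      have : g x₀ = f ⟨x₀, Submodule.mem_span_singleton_self x₀⟩ :=
        hg1 ⟨x₀, Submodule.mem_span_singleton_self x₀⟩
      rw [this]
      exact LinearPMap.mkSpanSingleton_apply ℝ ℝ hx0 (I x₀)
  by_cases hx0 : x₀ = 0
  · obtain ⟨p, hpD, _⟩ := key (cst 1) (by
      intro h
      have : (cst 1) 0 = (0 : Linf) 0 := by rw [h]
      simp [cst] at this)
    refine ⟨p, hpD, ?_⟩
    rw [hx0, map_zero, hI0]
  · exact key x₀ hx0

end HahnBanach

section CountableAdditivity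

lemma head_add_tail (N : ℕ) :
    indic {m | m < N} + indic {m | N ≤ m} = cst 1 := by
  ext m
  show indic {m | m < N} m + indic {m | N ≤ m} m = 1
  rcases lt_or_ge m N with h | h
  · rw [indic_apply_mem (by exact h), indic_apply_not_mem (by simpa using h)]
    norm_num
  · rw [indic_apply_not_mem (by simpa using h), indic_apply_mem (by exact h)]
    norm_num

lemma head_eq_sum (N : ℕ) :
    indic {m | m < N} = ∑ n ∈ Finset.range N, indic {n} := by
  ext m
  rw [BoundedContinuousFunction.sum_apply]
  have hterm : ∀ n : ℕ, indic ({n} : Set ℕ) m = if m = n then (1:ℝ) else 0 := by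
    intro n
    by_cases h : m = n
    · rw [if_pos h, indic_apply_mem (by simp [h])]
    · rw [if_neg h, indic_apply_not_mem (by simp [h])]
  simp only [hterm]
  rw [Finset.sum_ite_eq (Finset.range N) m (fun _ => (1:ℝ))]
  rcases lt_or_ge m N with h | h
  · rw [if_pos (Finset.mem_range.2 h), indic_apply_mem (by exact h)]
  · rw [if_neg (fun hc => by exact absurd (Finset.mem_range.1 hc) (not_lt.2 h)),
      indic_apply_not_mem (by simpa using h)]

lemma tail_mono {p : Ba} (hpos : IsPos p) {N M : ℕ} (h : N ≤ M) :
    p (indic {m | M ≤ m}) ≤ p (indic {m | N ≤ m}) :=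
  hpos.mono (indic_le_indic (fun m (hm : M ≤ m) => le_trans h hm))

lemma tail_nonneg {p : Ba} (hpos : IsPos p) (N : ℕ) : 0 ≤ p (indic {m | N ≤ m}) :=
  hpos _ (indic_nonneg _)

lemma partial_sum_eq {p : Ba} (h1 : p (cst 1) = 1) (N : ℕ) :
    ∑ n ∈ Finset.range N, p (indic {n}) = 1 - p (indic {m | N ≤ m}) := by
  have : p (indic {m | m < N}) + p (indic {m | N ≤ m}) = 1 := by
    rw [← map_add, head_add_tail, h1]
  rw [head_eq_sum, map_sum] at this
  linarith

lemma tail_tendsto_zero {p : Ba} (hpos : IsPos p)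
    (htail : ∀ ε : ℝ, 0 < ε → ∃ N : ℕ, p (indic {m | N ≤ m}) ≤ ε) :
    Filter.Tendsto (fun N => p (indic {m | N ≤ m})) Filter.atTop (nhds 0) := by
  rw [Metric.tendsto_atTop]
  intro ε hε
  obtain ⟨N₁, hN₁⟩ := htail (ε/2) (by linarith)
  refine ⟨N₁, fun N hN => ?_⟩
  rw [Real.dist_eq, sub_zero, abs_of_nonneg (tail_nonneg hpos N)]
  calc p (indic {m | N ≤ m}) ≤ p (indic {m | N₁ ≤ m}) := tail_mono hpos hN
  _ ≤ ε/2 := hN₁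
  _ < ε := by linarith

lemma rest_bound {p : Ba} (hpos : IsPos p) (x : Linf) (N : ℕ) :
    |p x - ∑ n ∈ Finset.range N, p (indic {n}) * x n| ≤ ‖x‖ * p (indic {m | N ≤ m}) := by
  have hrest : ∀ m : ℕ, (x - ∑ n ∈ Finset.range N, x n • indic {n}) m
      = if m < N then 0 else x m := by
    intro m
    show x m - (∑ n ∈ Finset.range N, x n • indic {n}) m = _
    rw [BoundedContinuousFunction.sum_apply]
    have hterm : ∀ n : ℕ, (x n • indic ({n} : Set ℕ)) m = if m = n then x n else 0 := by
      intro n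
      show x n * indic ({n} : Set ℕ) m = _
      by_cases h : m = n
      · rw [if_pos h, indic_apply_mem (by simp [h]), mul_one]
      · rw [if_neg h, indic_apply_not_mem (by simp [h]), mul_zero]
    simp only [hterm]
    rw [Finset.sum_ite_eq (Finset.range N) m (fun n => x n)]
    rcases lt_or_ge m N with h | h
    · rw [if_pos (Finset.mem_range.2 h), if_pos h]; ring
    · rw [if_neg (fun hc => by exact absurd (Finset.mem_range.1 hc) (not_lt.2 h)), if_neg (not_lt.2 h)]
      ring
  have hup : p (x - ∑ n ∈ Finset.range N, x n • indic {n}) ≤ ‖x‖ * p (indic {m | N ≤ m}) := by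
    have := hpos.mono (x := x - ∑ n ∈ Finset.range N, x n • indic {n})
      (y := ‖x‖ • indic {m | N ≤ m}) (fun m => by
        rw [hrest m]
        show _ ≤ ‖x‖ * indic {m | N ≤ m} m
        rcases lt_or_ge m N with h | h
        · rw [if_pos h, indic_apply_not_mem (by simpa using h), mul_zero]
        · rw [if_neg (not_lt.2 h), indic_apply_mem (by exact h), mul_one]
          exact (abs_le.1 (abs_apply_le_norm x m)).2)
    rwa [map_smul, smul_eq_mul] at this
  have hdown : -(‖x‖ * p (indic {m | N ≤ m})) ≤ p (x - ∑ n ∈ Finset.range N, x n • indic {n}) := by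
    have := hpos.mono (x := (-‖x‖) • indic {m | N ≤ m})
      (y := x - ∑ n ∈ Finset.range N, x n • indic {n}) (fun m => by
        rw [hrest m]
        show (-‖x‖) * indic {m | N ≤ m} m ≤ _
        rcases lt_or_ge m N with h | h
        · rw [if_pos h, indic_apply_not_mem (by simpa using h), mul_zero]
        · rw [if_neg (not_lt.2 h), indic_apply_mem (by exact h), mul_one]
          exact (abs_le.1 (abs_apply_le_norm x m)).1)
    rwa [map_smul, smul_eq_mul, neg_mul] at this
  have hsplit : p (x - ∑ n ∈ Finset.range N, x n • indic {n})
      = p x - ∑ n ∈ Finset.range N, p (indic {n}) * x n := by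
    rw [map_sub, map_sum]
    congr 1
    apply Finset.sum_congr rfl
    intro n _
    rw [map_smul, smul_eq_mul, mul_comm]
  rw [hsplit] at hup hdown
  rw [abs_le]
  constructor <;> linarith

/-- A positive normalized functional with vanishing tails is countably additive. -/
lemma mem_DeltaSigma_of_tail {p : Ba} (hpos : IsPos p) (h1 : p (cst 1) = 1)
    (htail : ∀ ε : ℝ, 0 < ε → ∃ N : ℕ, p (indic {m | N ≤ m}) ≤ ε) :
    p ∈ DeltaSigma := by
  set f : ℕ → ℝ := fun n => p (indic {n}) with hf
  have hf0 : ∀ n, 0 ≤ f n := fun n => hpos _ (indic_nonneg _)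
  have hPsum : ∀ N, ∑ n ∈ Finset.range N, f n = 1 - p (indic {m | N ≤ m}) :=
    partial_sum_eq h1
  have hsummable : Summable f :=
    summable_of_sum_range_le hf0 (fun N => by
      rw [hPsum N]; linarith [tail_nonneg hpos N])
  have htail0 := tail_tendsto_zero hpos htail
  have htendsto : Filter.Tendsto (fun N => ∑ n ∈ Finset.range N, f n)
      Filter.atTop (nhds 1) := by
    have : (fun N => ∑ n ∈ Finset.range N, f n)
        = fun N => 1 - p (indic {m | N ≤ m}) := funext hPsum
    rw [this]
    simpa using (tendsto_const_nhds.sub htail0)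
  have htsum : ∑' n, f n = 1 :=
    ((hasSum_iff_tendsto_nat_of_nonneg hf0 1).2 htendsto).tsum_eq
  refine ⟨⟨hpos, h1⟩, f, hf0, hsummable, htsum, ?_⟩
  intro x
  have hsx : Summable (fun n => f n * x n) := by
    apply Summable.of_norm_bounded (g := fun n => f n * ‖x‖) (hsummable.mul_right ‖x‖)
    intro n
    rw [Real.norm_eq_abs, abs_mul, abs_of_nonneg (hf0 n)]
    exact mul_le_mul_of_nonneg_left (abs_apply_le_norm x n) (hf0 n)
  have hpartial : Filter.Tendsto (fun N => ∑ n ∈ Finset.range N, f n * x n)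
      Filter.atTop (nhds (p x)) := by
    apply tendsto_of_tendsto_of_tendsto_of_le_of_le
      (g := fun N => p x - ‖x‖ * p (indic {m | N ≤ m}))
      (h := fun N => p x + ‖x‖ * p (indic {m | N ≤ m}))
    · simpa using tendsto_const_nhds.sub (htail0.const_mul ‖x‖)
    · simpa using tendsto_const_nhds.add (htail0.const_mul ‖x‖)
    · intro N
      have hb := (abs_le.1 (rest_bound hpos x N)).2
      show p x - ‖x‖ * p (indic {m | N ≤ m}) ≤ ∑ n ∈ Finset.range N, f n * x n
      simp only [hf]
      linarith
    · intro N
      have hb := (abs_le.1 (rest_bound hpos x N)).1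
      show (∑ n ∈ Finset.range N, f n * x n) ≤ p x + ‖x‖ * p (indic {m | N ≤ m})
      simp only [hf]
      linarith
  exact (tendsto_nhds_unique hsx.hasSum.tendsto_sum_nat hpartial).symm

end CountableAdditivity

section EigenMachinery

/-- The canonical dominating set of a superlinear functional. -/
def Dzero (I : Linf → ℝ) : Set Ba :=
  {p | IsPos p ∧ p (cst 1) = 1 ∧ ∀ y : Linf, I y ≤ p y}

lemma Dzero_closed (I : Linf → ℝ) : IsClosed (Dzero I) := by
  have h1 : IsClosed {p : Ba | IsPos p} := by
    have : {p : Ba | IsPos p} =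
        ⋂ x ∈ {x : Linf | ∀ n, 0 ≤ x n}, {p : Ba | 0 ≤ p x} := by
      ext p; simp [IsPos]
    rw [this]
    exact isClosed_biInter fun x _ =>
      isClosed_le continuous_const (WeakDual.eval_continuous x)
  have h2 : IsClosed {p : Ba | p (cst 1) = 1} :=
    isClosed_eq (WeakDual.eval_continuous (cst 1)) continuous_const
  have h3 : IsClosed {p : Ba | ∀ y : Linf, I y ≤ p y} := by
    have : {p : Ba | ∀ y : Linf, I y ≤ p y} = ⋂ y : Linf, {p : Ba | I y ≤ p y} := by
      ext p; simp
    rw [this]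
    exact isClosed_iInter fun y =>
      isClosed_le continuous_const (WeakDual.eval_continuous y)
  exact h1.inter (h2.inter h3)

lemma Dzero_sub_Delta (I : Linf → ℝ) : Dzero I ⊆ Delta := fun p hp => ⟨hp.1, hp.2.1⟩

lemma Dzero_compact (I : Linf → ℝ) : IsCompact (Dzero I) :=
  isCompact_of_sub_Delta (Dzero_closed I) (Dzero_sub_Delta I)

variable {T : Linf → Linf} {I : Linf → ℝ}

/-- Consequence of ITIS: `T*` dominates `I`-levels from below. -/
lemma key_lower (hlin : IsLinearMap ℝ T)
    (hkey : ∀ z d : Linf, I z ≤ I (z + d) → I z ≤ I (z + T d))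
    (hcstI : ∀ θ : ℝ, I (cst θ) = θ)
    (y : Linf) {p : Ba} (hp : p ∈ Dzero I) :
    p (T (cst 1)) * I y ≤ p (T y) := by
  obtain ⟨hpos, h1, hdom⟩ := hp
  set c := I y with hc
  have hcond : I (cst c) ≤ I (cst c + (y - cst c)) := by
    have : cst c + (y - cst c) = y := by ring
    rw [this, hcstI]
  have hconc := hkey (cst c) (y - cst c) hcond
  rw [hcstI] at hconc
  have hTd : T (y - cst c) = T y - c • T (cst 1) := by
    rw [hlin.map_sub, cst_smul, hlin.map_smul]
  rw [hTd] at hconc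
  have hpconc : c ≤ p (cst c + (T y - c • T (cst 1))) := le_trans hconc (hdom _)
  rw [map_add, map_sub, map_smul, Ba.map_cst p h1, smul_eq_mul] at hpconc
  linarith

/-- Consequence of ITIS: at a contact point, `T*` is dominated from above. -/
lemma key_upper (hlin : IsLinearMap ℝ T)
    (hkey : ∀ z d : Linf, I z ≤ I (z + d) → I z ≤ I (z + T d))
    (hcstI : ∀ θ : ℝ, I (cst θ) = θ)
    (x : Linf) {p : Ba} (hp : p ∈ Dzero I) (hpx : p x = I x) :
    p (T x) ≤ I x * p (T (cst 1)) := by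
  obtain ⟨hpos, h1, hdom⟩ := hp
  set c := I x with hc
  have hcond : I x ≤ I (x + (cst c - x)) := by
    have : x + (cst c - x) = cst c := by ring
    rw [this, hcstI]
  have hconc := hkey x (cst c - x) hcond
  have hTd : T (cst c - x) = c • T (cst 1) - T x := by
    rw [hlin.map_sub, cst_smul, hlin.map_smul]
  rw [hTd] at hconc
  have hpconc : c ≤ p (x + (c • T (cst 1) - T x)) := le_trans hconc (hdom _)
  rw [map_add, map_sub, map_smul, smul_eq_mul, hpx] at hpconc
  linarith

/-- A unique minimizer is an eigenvector of the adjoint. -/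
lemma eigen_of_unique (hlin : IsLinearMap ℝ T) (hcont : Continuous T) (hposT : PosMap T)
    (hkey : ∀ z d : Linf, I z ≤ I (z + d) → I z ≤ I (z + T d))
    (hcstI : ∀ θ : ℝ, I (cst θ) = θ)
    (x : Linf) {p : Ba} (hp : p ∈ Dzero I) (hpx : p x = I x)
    (huniq : ∀ q ∈ Dzero I, q x = I x → q = p) :
    ∀ y : Linf, p (T y) = p (T (cst 1)) * p y := by
  obtain ⟨hpos, h1, hdom⟩ := hp
  set lam := p (T (cst 1)) with hlam
  have hT1pos : ∀ n, 0 ≤ T (cst 1) n :=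
    hposT (cst 1) (fun n => by rw [cst_apply]; norm_num)
  have hlam0 : 0 ≤ lam := hpos _ hT1pos
  have habs : ∀ y : Linf, p (T y) ≤ ‖y‖ * lam := by
    intro y
    have hpt : ∀ n, T y n ≤ (‖y‖ • T (cst 1)) n := by
      intro n
      have heq : ‖y‖ • T (cst 1) - T y = T (cst ‖y‖ - y) := by
        rw [hlin.map_sub, show cst ‖y‖ = ‖y‖ • cst 1 from cst_smul ‖y‖, hlin.map_smul]
      have hge : ∀ m, 0 ≤ T (cst ‖y‖ - y) m :=
        hposT _ (fun m => by
          show 0 ≤ cst ‖y‖ m - y m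
          rw [cst_apply]
          linarith [(abs_le.1 (abs_apply_le_norm y m)).2])
      have := hge n
      rw [← heq] at this
      have hsub : (‖y‖ • T (cst 1) - T y) n = (‖y‖ • T (cst 1)) n - T y n := rfl
      rw [hsub] at this
      linarith
    have := hpos.mono hpt
    rwa [map_smul, smul_eq_mul] at this
  rcases eq_or_lt_of_le hlam0 with hlamz | hlampos
  · intro y
    have h1' := habs y
    have h2' := habs (-y)
    rw [hlin.map_neg, map_neg, norm_neg] at h2'
    rw [← hlamz] at h1' h2' ⊢
    simp only [mul_zero, zero_mul] at *
    linarith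
  · set Tc : Linf →L[ℝ] Linf := { toLinearMap := IsLinearMap.mk' T hlin, cont := hcont }
      with hTc
    have hTcapp : ∀ y, Tc y = T y := fun y => rfl
    set pc : Linf →L[ℝ] ℝ := p with hpc
    set q : Ba := lam⁻¹ • (pc.comp Tc) with hq
    have hqapp : ∀ y : Linf, q y = lam⁻¹ * p (T y) := fun y => rfl
    have hqD : q ∈ Dzero I := by
      refine ⟨?_, ?_, ?_⟩
      · intro y hy
        rw [hqapp]
        exact mul_nonneg (inv_nonneg.2 hlam0) (hpos _ (hposT y hy))
      · rw [hqapp, ← hlam, inv_mul_cancel₀ (ne_of_gt hlampos)]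
      · intro y
        rw [hqapp]
        have := key_lower hlin hkey hcstI y (⟨hpos, h1, hdom⟩ : _ ∈ Dzero I)
        rw [← hlam] at this
        calc I y = lam⁻¹ * (lam * I y) := by
              field_simp
        _ ≤ lam⁻¹ * p (T y) :=
              mul_le_mul_of_nonneg_left this (inv_nonneg.2 hlam0)
    have hqx : q x = I x := by
      rw [hqapp]
      have hup := key_upper hlin hkey hcstI x (⟨hpos, h1, hdom⟩ : _ ∈ Dzero I) hpx
      have hlo := key_lower hlin hkey hcstI x (⟨hpos, h1, hdom⟩ : _ ∈ Dzero I)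
      rw [← hlam] at hup hlo
      have : p (T x) = lam * I x := le_antisymm (by linarith) hlo
      rw [this]
      field_simp
    have hqp : q = p := huniq q hqD hqx
    intro y
    have : q y = p y := by rw [hqp]
    rw [hqapp] at this
    field_simp at this
    linarith [this]

end EigenMachinery

section QuadraticTrick

/-- Coefficients of a discount structure. -/
def coef (p : Ba) (n : ℕ) : ℝ := p (indic {n})

lemma coef_spec {p : Ba} (hp : p ∈ DeltaSigma) :
    (∀ n, 0 ≤ coef p n) ∧ Summable (coef p) ∧ (∑' n, coef p n) = 1 ∧
      ∀ y : Linf, p y = ∑' n, coef p n * y n := by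
  obtain ⟨_, f, hf0, hfs, hft, hrep⟩ := hp
  have hfe : coef p = f := funext (fun n => rep_coeff hrep n)
  rw [hfe]
  exact ⟨hf0, hfs, hft, hrep⟩

lemma coef_le_one {p : Ba} (hpos : IsPos p) (h1 : p (cst 1) = 1) (n : ℕ) :
    coef p n ≤ 1 := by
  have := hpos.mono (x := indic {n}) (y := cst 1) (fun m => by
    rw [cst_apply]
    by_cases h : m ∈ ({n} : Set ℕ)
    · rw [indic_apply_mem h]
    · rw [indic_apply_not_mem h]; norm_num)
  rwa [h1] at this

variable {T : Linf → Linf} {I : Linf → ℝ}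

set_option maxHeartbeats 2000000 in
lemma exists_eigen_min (hlin : IsLinearMap ℝ T) (hcont : Continuous T) (hposT : PosMap T)
    (hkey : ∀ z d : Linf, I z ≤ I (z + d) → I z ≤ I (z + T d))
    (hsuper : ∀ x y : Linf, I x + I y ≤ I (x + y))
    (hsmul : ∀ α : ℝ, 0 ≤ α → ∀ x : Linf, I (α • x) = α * I x)
    (hmono : ∀ x y : Linf, (∀ n, y n ≤ x n) → I y ≤ I x)
    (hcstI : ∀ θ : ℝ, I (cst θ) = θ)
    (htail : ∀ ε : ℝ, 0 < ε → ∃ N : ℕ, ∀ p ∈ Dzero I, p (indic {m | N ≤ m}) ≤ ε)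
    (x : Linf) {ε : ℝ} (hε : 0 < ε) :
    ∃ p ∈ Dzero I, (∀ y : Linf, p (T y) = p (T (cst 1)) * p y) ∧ p x ≤ I x + ε := by
  classical
  -- countable additivity of every element of `Dzero I`
  have hDS : ∀ p ∈ Dzero I, p ∈ DeltaSigma := fun p hp =>
    mem_DeltaSigma_of_tail hp.1 hp.2.1 (fun ε' hε' =>
      (htail ε' hε').imp (fun N h => h p hp))
  have hcomp := Dzero_compact I
  -- basic coefficient facts
  have hc0 : ∀ p ∈ Dzero I, ∀ n, 0 ≤ coef p n := fun p hp => (coef_spec (hDS p hp)).1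
  have hcs : ∀ p ∈ Dzero I, Summable (coef p) := fun p hp => (coef_spec (hDS p hp)).2.1
  have hct : ∀ p ∈ Dzero I, (∑' n, coef p n) = 1 := fun p hp => (coef_spec (hDS p hp)).2.2.1
  have hcr : ∀ p ∈ Dzero I, ∀ y : Linf, p y = ∑' n, coef p n * y n :=
    fun p hp => (coef_spec (hDS p hp)).2.2.2
  have hc1 : ∀ p ∈ Dzero I, ∀ n, coef p n ≤ 1 := fun p hp => coef_le_one hp.1 hp.2.1
  have hsqsum : ∀ p ∈ Dzero I, Summable (fun n => (coef p n)^2) := by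
    intro p hp
    apply Summable.of_nonneg_of_le (fun n => sq_nonneg _) _ (hcs p hp)
    intro n
    have h0 := hc0 p hp n
    have h1 := hc1 p hp n
    nlinarith
  have hsx : ∀ p ∈ Dzero I, Summable (fun n => coef p n * x n) := by
    intro p hp
    apply Summable.of_norm_bounded (g := fun n => coef p n * ‖x‖) ((hcs p hp).mul_right ‖x‖)
    intro n
    rw [Real.norm_eq_abs, abs_mul, abs_of_nonneg (hc0 p hp n)]
    exact mul_le_mul_of_nonneg_left (abs_apply_le_norm x n) (hc0 p hp n)
  -- the squared-norm functional and its continuity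
  set n2 : Ba → ℝ := fun p => ∑' n, (coef p n)^2 with hn2def
  have htailsum : ∀ p ∈ Dzero I, ∀ N : ℕ,
      (∑' k, coef p (k + N)) = p (indic {m | N ≤ m}) := by
    intro p hp N
    have h := Summable.sum_add_tsum_nat_add (f := coef p) N (hcs p hp)
    rw [hct p hp] at h
    have hps : ∑ n ∈ Finset.range N, coef p n = 1 - p (indic {m | N ≤ m}) :=
      partial_sum_eq hp.2.1 N
    linarith
  have htailsq : ∀ p ∈ Dzero I, ∀ N : ℕ,
      n2 p - (∑ n ∈ Finset.range N, (coef p n)^2) = ∑' k, (coef p (k + N))^2 := by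
    intro p hp N
    have h := Summable.sum_add_tsum_nat_add (f := fun n => (coef p n)^2) N (hsqsum p hp)
    simp only [hn2def]
    linarith
  have htailsq_le : ∀ p ∈ Dzero I, ∀ N : ℕ,
      (∑' k, (coef p (k + N))^2) ≤ p (indic {m | N ≤ m}) := by
    intro p hp N
    rw [← htailsum p hp N]
    have hs1 : Summable (fun k : ℕ => (coef p (k + N))^2) :=
      (summable_nat_add_iff (f := fun n => (coef p n)^2) N).2 (hsqsum p hp)
    have hs2 : Summable (fun k : ℕ => coef p (k + N)) :=
      (summable_nat_add_iff (f := coef p) N).2 (hcs p hp)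
    refine Summable.tsum_le_tsum (fun k => ?_) hs1 hs2
    have h0 := hc0 p hp (k + N)
    have h1 := hc1 p hp (k + N)
    nlinarith
  have hsq_nonneg : ∀ p ∈ Dzero I, ∀ N : ℕ, 0 ≤ ∑' k, (coef p (k + N))^2 :=
    fun p hp N => tsum_nonneg (fun k => sq_nonneg _)
  have hunif : TendstoUniformlyOn
      (fun N (p : Ba) => ∑ n ∈ Finset.range N, (coef p n)^2) n2 Filter.atTop (Dzero I) := by
    rw [Metric.tendstoUniformlyOn_iff]
    intro ε' hε'
    obtain ⟨N₀, hN₀⟩ := htail (ε'/2) (by linarith)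
    filter_upwards [Filter.eventually_ge_atTop N₀] with N hN
    intro p hp
    rw [Real.dist_eq]
    have h1 := htailsq p hp N
    have h2 := htailsq_le p hp N
    have h3 := hsq_nonneg p hp N
    have h4 : p (indic {m | N ≤ m}) ≤ p (indic {m | N₀ ≤ m}) := tail_mono hp.1 hN
    have h5 := hN₀ p hp
    rw [abs_of_nonneg (by linarith)]
    linarith
  have hn2cont : ContinuousOn n2 (Dzero I) := by
    apply hunif.continuousOn (Filter.Eventually.frequently ?_)
    filter_upwards with N
    apply Continuous.continuousOn
    apply continuous_finset_sum
    intro n _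
    exact (WeakDual.eval_continuous (indic {n})).pow 2
  -- contact point at `x`
  obtain ⟨q₀, hq₀D, hq₀x⟩ := exists_dominating hsuper hsmul hmono hcstI x
  -- maximize the perturbed functional
  obtain ⟨t, ht, htε⟩ : ∃ t : ℝ, 0 < t ∧ 1 / (2 * t) = ε :=
    ⟨(2 * ε)⁻¹, by positivity, by field_simp⟩
  set φ : Ba → ℝ := fun p => n2 p - 2 * t * (p x) with hφdef
  have hφcont : ContinuousOn φ (Dzero I) :=
    hn2cont.sub ((continuous_const.mul (WeakDual.eval_continuous x)).continuousOn)
  obtain ⟨ps, hpsD, hmax⟩ := hcomp.exists_isMaxOn ⟨q₀, hq₀D⟩ hφcont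
  -- the exposing vector
  have hwbound : ∀ n, |2 * t * (x n) - 2 * (coef ps n)| ≤ 2 * t * ‖x‖ + 2 := by
    intro n
    have h1 : |2 * t * x n| ≤ 2 * t * ‖x‖ := by
      rw [abs_mul, abs_of_nonneg (by positivity : (0:ℝ) ≤ 2 * t)]
      exact mul_le_mul_of_nonneg_left (abs_apply_le_norm x n) (by positivity)
    have h2 : |2 * (coef ps n)| ≤ 2 := by
      rw [abs_mul, abs_of_nonneg (by norm_num : (0:ℝ) ≤ 2),
        abs_of_nonneg (hc0 ps hpsD n)]
      linarith [hc1 ps hpsD n]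
    calc |2 * t * (x n) - 2 * (coef ps n)| ≤ |2 * t * x n| + |2 * (coef ps n)| :=
      abs_sub _ _
    _ ≤ 2 * t * ‖x‖ + 2 := by linarith
  set w : Linf := ofSeq (fun n => 2 * t * (x n) - 2 * (coef ps n))
    (2 * t * ‖x‖ + 2) hwbound with hwdef
  have hwapp : ∀ n, w n = 2 * t * (x n) - 2 * (coef ps n) := fun n => rfl
  -- inner products
  have hip_summ : ∀ q ∈ Dzero I, Summable (fun n => coef q n * coef ps n) := by
    intro q hq
    apply Summable.of_nonneg_of_le
      (fun n => mul_nonneg (hc0 q hq n) (hc0 ps hpsD n)) _ (hcs q hq)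
    intro n
    calc coef q n * coef ps n ≤ coef q n * 1 :=
      mul_le_mul_of_nonneg_left (hc1 ps hpsD n) (hc0 q hq n)
    _ = coef q n := mul_one _
  have hqw : ∀ q ∈ Dzero I,
      q w = 2 * t * (q x) - 2 * (∑' n, coef q n * coef ps n) := by
    intro q hq
    rw [hcr q hq w]
    have hterm : ∀ n, coef q n * w n
        = 2 * t * (coef q n * x n) - 2 * (coef q n * coef ps n) := by
      intro n; rw [hwapp n]; ring
    rw [tsum_congr hterm, Summable.tsum_sub (((hsx q hq).mul_left (2*t)))
      (((hip_summ q hq).mul_left 2)), tsum_mul_left, tsum_mul_left, ← hcr q hq x]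
  have hpsw : ps w = 2 * t * (ps x) - 2 * n2 ps := by
    rw [hqw ps hpsD]
    have hsq : (∑' n, coef ps n * coef ps n) = n2 ps := by
      simp only [hn2def]
      exact tsum_congr (fun n => (pow_two (coef ps n)).symm)
    rw [hsq]
  -- minimality and uniqueness at the exposing vector
  have hkey_min : ∀ q ∈ Dzero I, ps w ≤ q w ∧ (q w = ps w → q = ps) := by
    intro q hq
    have hφq : φ q ≤ φ ps := isMaxOn_iff.1 hmax q hq
    have hsq_summ : Summable (fun n => (coef q n - coef ps n)^2) := by
      have hs : Summable (fun n => (coef q n ^2 - 2*(coef q n * coef ps n)) + coef ps n ^2) :=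
        ((hsqsum q hq).sub ((hip_summ q hq).mul_left 2)).add (hsqsum ps hpsD)
      exact hs.congr (fun n => by ring)
    have hsq_eq : (∑' n, (coef q n - coef ps n)^2)
        = n2 q - 2*(∑' n, coef q n * coef ps n) + n2 ps := by
      have h1 : (∑' n, (coef q n - coef ps n)^2)
          = ∑' n, ((coef q n ^2 - 2*(coef q n * coef ps n)) + coef ps n ^2) :=
        tsum_congr (fun n => by ring)
      rw [h1, Summable.tsum_add ((hsqsum q hq).sub ((hip_summ q hq).mul_left 2)) (hsqsum ps hpsD),
        Summable.tsum_sub (hsqsum q hq) ((hip_summ q hq).mul_left 2), tsum_mul_left]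
      try simp only [hn2def]
    have hsq0 : 0 ≤ ∑' n, (coef q n - coef ps n)^2 := tsum_nonneg (fun n => sq_nonneg _)
    have hdiff : q w - ps w = (φ ps - φ q) + ∑' n, (coef q n - coef ps n)^2 := by
      rw [hqw q hq, hpsw, hsq_eq]
      simp only [hφdef]
      ring
    constructor
    · linarith
    · intro heqw
      have hzero : (∑' n, (coef q n - coef ps n)^2) = 0 := by linarith
      have hcoef : ∀ n, coef q n = coef ps n := by
        intro n
        have hle : (coef q n - coef ps n)^2 ≤ ∑' m, (coef q m - coef ps m)^2 :=
          Summable.le_tsum hsq_summ n (fun m _ => sq_nonneg _)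
        nlinarith [sq_nonneg (coef q n - coef ps n)]
      apply DFunLike.ext q ps
      intro y
      rw [hcr q hq y, hcr ps hpsD y]
      exact tsum_congr (fun n => by rw [hcoef n])
  obtain ⟨pw, hpwD, hpwx⟩ := exists_dominating hsuper hsmul hmono hcstI w
  have hpsw_eq : ps w = I w :=
    le_antisymm (le_of_le_of_eq ((hkey_min pw hpwD).1) hpwx) (hpsD.2.2 w)
  have huniqw : ∀ q ∈ Dzero I, q w = I w → q = ps := fun q hq hqw' =>
    (hkey_min q hq).2 (by rw [hqw', ← hpsw_eq])
  have heig := eigen_of_unique hlin hcont hposT hkey hcstI w hpsD hpsw_eq huniqw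
  -- the contact bound
  have hn2le1 : ∀ p ∈ Dzero I, n2 p ≤ 1 := by
    intro p hp
    simp only [hn2def]
    rw [← hct p hp]
    apply Summable.tsum_le_tsum _ (hsqsum p hp) (hcs p hp)
    intro n
    nlinarith [hc0 p hp n, hc1 p hp n]
  have hn2ge0 : 0 ≤ n2 q₀ := tsum_nonneg (fun n => sq_nonneg _)
  have hφ0 : φ q₀ ≤ φ ps := isMaxOn_iff.1 hmax q₀ hq₀D
  have hbound : ps x ≤ I x + ε := by
    simp only [hφdef] at hφ0
    rw [hq₀x] at hφ0
    have h1 := hn2le1 ps hpsD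
    have h3 : 2*t*(ps x - I x) ≤ 1 := by linarith
    have h4 : ps x - I x ≤ 1/(2*t) := by
      rw [le_div_iff₀ (by positivity)]
      linarith
    rw [htε] at h4
    linarith
  exact ⟨ps, hpsD, heig, hbound⟩

end QuadraticTrick

section PartOne

variable {R : Linf → Linf → Prop}

lemma MC_tail (hA1 : A1 R) (hA2 : A2 R) (hA3 : A3 R) (hA4 : A4 R)
    (hISU : ISU R) (hMC : MC R) :
    ∀ ε : ℝ, 0 < ε → ∃ N : ℕ, ∀ p ∈ Dzero (IofR R), p (indic {m | N ≤ m}) ≤ ε := by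
  intro ε hε
  have hrep := IofR_represents hA1 hA2 hA3 hA4 hISU
  have hSP : SPref R (cst 1) (cst (1 - ε)) :=
    ⟨R_cst_mono hA2 (by linarith), R_cst_strict hA2 hA4 hISU (by linarith)⟩
  have hdec : ∀ n : ℕ, {m : ℕ | n + 1 ≤ m} ⊆ {m : ℕ | n ≤ m} :=
    fun n m hm => le_trans (Nat.le_succ n) hm
  have hempty : (⋂ n, {m : ℕ | n ≤ m}) = ∅ :=
    Set.eq_empty_iff_forall_notMem.2 (fun m hm =>
      Nat.not_succ_le_self m (Set.mem_iInter.1 hm (m + 1)))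
  obtain ⟨n₀, hn₀⟩ := hMC (cst 1) (1 - ε) hSP (fun n => {m : ℕ | n ≤ m}) hdec hempty 0
  have hpatch_eq : patch 0 {m : ℕ | n₀ ≤ m} (cst 1) = cst 1 - indic {m : ℕ | n₀ ≤ m} := by
    ext m
    show patch 0 {m : ℕ | n₀ ≤ m} (cst 1) m = cst 1 m - indic {m : ℕ | n₀ ≤ m} m
    by_cases hm : m ∈ {m : ℕ | n₀ ≤ m}
    · rw [patch_apply_mem hm, indic_apply_mem hm, cst_apply]; norm_num
    · rw [patch_apply_not_mem hm, indic_apply_not_mem hm, cst_apply]; norm_num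
  have hIpatch : 1 - ε ≤ IofR R (patch 0 {m : ℕ | n₀ ≤ m} (cst 1)) := by
    have := (hrep _ (cst (1 - ε))).1 hn₀.1
    rwa [IofR_cst hA1 hA2 hA3 hA4 hISU] at this
  refine ⟨n₀, fun p hp => ?_⟩
  have hdom := hp.2.2 (patch 0 {m : ℕ | n₀ ≤ m} (cst 1))
  rw [hpatch_eq, map_sub, Ba.map_cst p hp.2.1] at hdom
  rw [hpatch_eq] at hIpatch
  linarith

/-- Part (i): the representation theorem. -/
lemma part1_lemma (T : Linf → Linf) (hlin : IsLinearMap ℝ T) (hcont : Continuous T)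
    (hposT : PosMap T) (hA15 : A15 R) (hMC : MC R) (hISU : ISU R) (hITIS : ITIS T R) :
    ∃ D : Set Ba, D.Nonempty ∧ IsClosed D ∧ D ⊆ DeltaSigma ∩ DeltaT T ∧
      ∃ I : Linf → ℝ, ConstEquiv R I ∧ Represents R I ∧
        (∀ J : Linf → ℝ, ConstEquiv R J → J = I) ∧ MinForm D I := by
  obtain ⟨hA1, hA2, hA3, hA4, hA5⟩ := hA15
  set I : Linf → ℝ := IofR R with hIdef
  have hrep : Represents R I := IofR_represents hA1 hA2 hA3 hA4 hISU
  have hconstEq : ConstEquiv R I := fun x => IofR_constEquiv hA1 hA2 hA3 hA4 hISU x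
  have hcstI : ∀ θ : ℝ, I (cst θ) = θ := IofR_cst hA1 hA2 hA3 hA4 hISU
  have hmono' : ∀ x y : Linf, (∀ n, y n ≤ x n) → I y ≤ I x :=
    fun x y h => IofR_mono hA1 hA2 hA3 hA4 hISU h
  have hsmul' : ∀ α : ℝ, 0 ≤ α → ∀ x : Linf, I (α • x) = α * I x :=
    fun α hα x => IofR_smul hA1 hA2 hA3 hA4 hISU hα x
  have hsuper' : ∀ x y : Linf, I x + I y ≤ I (x + y) :=
    fun x y => IofR_superadd hA1 hA2 hA3 hA4 hA5 hISU x y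
  have hkey : ∀ z d : Linf, I z ≤ I (z + d) → I z ≤ I (z + T d) :=
    fun z d h => (hrep (z + T d) z).1 (hITIS z d ((hrep (z + d) z).2 h))
  have htail := MC_tail hA1 hA2 hA3 hA4 hISU hMC
  set D : Set Ba := Dzero I ∩ {p : Ba | ∀ y : Linf, p (T y) = p (T (cst 1)) * p y}
    with hDdef
  have hDcl : IsClosed D := by
    apply (Dzero_closed I).inter
    have : {p : Ba | ∀ y : Linf, p (T y) = p (T (cst 1)) * p y}
        = ⋂ y : Linf, {p : Ba | p (T y) = p (T (cst 1)) * p y} := by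
      ext p; simp
    rw [this]
    exact isClosed_iInter fun y => isClosed_eq (WeakDual.eval_continuous (T y))
      ((WeakDual.eval_continuous (T (cst 1))).mul (WeakDual.eval_continuous y))
  have hmin : ∀ x : Linf, ∀ ε : ℝ, 0 < ε → ∃ p ∈ D, p x ≤ I x + ε := by
    intro x ε hε
    obtain ⟨p, hpD, heig, hb⟩ := exists_eigen_min hlin hcont hposT hkey
      hsuper' hsmul' hmono' hcstI htail x hε
    exact ⟨p, ⟨hpD, heig⟩, hb⟩
  have hne : D.Nonempty := by
    obtain ⟨p, hp, _⟩ := hmin (cst 1) 1 one_pos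
    exact ⟨p, hp⟩
  have hDsubΔ : D ⊆ Delta := fun p hp => ⟨hp.1.1, hp.1.2.1⟩
  have hsubset : D ⊆ DeltaSigma ∩ DeltaT T := by
    rintro p ⟨hpD, heig⟩
    refine ⟨mem_DeltaSigma_of_tail hpD.1 hpD.2.1 (fun ε' hε' =>
      (htail ε' hε').imp (fun N h => h p hpD)), ⟨hpD.1, hpD.2.1⟩, p (T (cst 1)), heig⟩
  refine ⟨D, hne, hDcl, hsubset, I, hconstEq, hrep, ?_, ?_⟩
  · intro J hJ
    funext x
    exact (IofR_eq_of_equiv hA1 hA2 hA3 hA4 hISU (hJ x).1 (hJ x).2).symm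
  · intro x
    constructor
    · have hDcomp : IsCompact D := isCompact_of_sub_Delta hDcl hDsubΔ
      obtain ⟨p, hpD, hpmin⟩ := hDcomp.exists_isMinOn hne
        ((WeakDual.eval_continuous x).continuousOn)
      refine ⟨p, hpD, ?_⟩
      have hge : I x ≤ p x := hpD.1.2.2 x
      have hle : p x ≤ I x := by
        apply le_of_forall_pos_le_add
        intro ε hε
        obtain ⟨q, hq, hqx⟩ := hmin x ε hε
        exact le_trans (isMinOn_iff.1 hpmin q hq) hqx
      linarith
    · exact fun p hp => hp.1.2.2 x

end PartOne
/-- Proposition: countably additive maxmin: maxmin over a nonempty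
closed subset `D` of `F = {p ∈ Δ^σ : p is an eigenvector of T*}`. -/
theorem stmt11 (T : Linf → Linf) (hlin : IsLinearMap ℝ T) (hcont : Continuous T)
    (hpos : PosMap T) :
    (∀ R : Linf → Linf → Prop, A15 R → MC R → ISU R → ITIS T R →
      ∃ D : Set Ba, D.Nonempty ∧ IsClosed D ∧ D ⊆ DeltaSigma ∩ DeltaT T ∧
        ∃ I : Linf → ℝ, ConstEquiv R I ∧ Represents R I ∧
          (∀ J : Linf → ℝ, ConstEquiv R J → J = I) ∧ MinForm D I) ∧
    ((∀ p ∈ DeltaSigma ∩ DeltaT T, p (T (cst 1)) ≤ 1) →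
      ∀ D : Set Ba, D.Nonempty → IsClosed D → D ⊆ DeltaSigma ∩ DeltaT T →
        ∀ I : Linf → ℝ, MinForm D I →
          A15 (fun x y => I y ≤ I x) ∧ MC (fun x y => I y ≤ I x) ∧
            ISU (fun x y => I y ≤ I x) ∧ ITIS T (fun x y => I y ≤ I x)) := by
  constructor
  · intro R hA15 hMC' hISU' hITIS'
    exact part1_lemma T hlin hcont hpos hA15 hMC' hISU' hITIS'
  · intro hF D hne hclosed hsub I hI
    exact part2_lemma T hpos hF D hne hclosed hsub I hI

end
end

section
/- Let T : l∞ → l∞ be a continuous positive linear map with adjoint T*. Suppose (i) ‖T(𝟙_{A_n})‖_∞ → 0 whenever (A_n) is a decreasing sequence of subsets of ℕ with empty intersection, and (ii) for every n ∈ ℕ there is a finite set E_n ⊆ ℕ such that the sequence T(𝟙_{{n}}) vanishes outside E_n. Then T* is a Yosida–Hewitt transformation: T*(μ) ∈ ca(ℕ) for every μ ∈ ca(ℕ), and T*(μ) ∈ pa(ℕ) for every μ ∈ pa(ℕ). -/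
open scoped ENNReal BoundedContinuousFunction

noncomputable section

/-- Lemma: a criterion for Yosida–Hewitt transformations: if
`‖T(𝟙_{Aₙ})‖ → 0` along every decreasing sequence of sets with empty intersection, and
each `T(𝟙_{{n}})` has finite support, then the adjoint `T*` (given by
`T*(μ) = μ ∘ T`) maps `ca(ℕ)` into `ca(ℕ)` and `pa(ℕ)` into `pa(ℕ)`. -/
theorem stmt17 (T : Linf → Linf) (hlin : IsLinearMap ℝ T) (hcont : Continuous T)
    (hpos : PosMap T)
    (h1 : ∀ A : ℕ → Set ℕ, (∀ n, A (n + 1) ⊆ A n) → (⋂ n, A n) = ∅ →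
      Filter.Tendsto (fun n => ‖T (indic (A n))‖) Filter.atTop (nhds 0))
    (h2 : ∀ n : ℕ, ∃ E : Finset ℕ, ∀ m : ℕ, m ∉ E → T (indic {n}) m = 0) :
    (∀ μ ∈ caSet, ∀ A : ℕ → Set ℕ, (∀ n, A (n + 1) ⊆ A n) → (⋂ n, A n) = ∅ →
      Filter.Tendsto (fun n => μ (T (indic (A n)))) Filter.atTop (nhds 0)) ∧
    (∀ μ ∈ paSet, ∀ n : ℕ, μ (T (indic {n})) = 0) := by
  constructor
  · intro μ _ A hdec hempty
    have hT := h1 A hdec hempty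
    let ν : Linf →L[ℝ] ℝ := μ
    have hbound : ∀ n, ‖μ (T (indic (A n)))‖ ≤ ‖ν‖ * ‖T (indic (A n))‖ := fun n =>
      ν.le_opNorm _
    have hlim : Filter.Tendsto (fun n => ‖ν‖ * ‖T (indic (A n))‖) Filter.atTop (nhds 0) := by
      simpa using hT.const_mul ‖ν‖
    exact squeeze_zero_norm hbound hlim
  · intro μ hμ n
    obtain ⟨E, hE⟩ := h2 n
    have key : T (indic {n}) = ∑ m ∈ E, (T (indic {n}) m) • indic {m} := by
      ext k
      by_cases hk : k ∈ E
      · rw [BoundedContinuousFunction.sum_apply, Finset.sum_eq_single k]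
        · simp [indic, ofSeq]
        · intro b _ hb
          simp [indic, ofSeq, Set.indicator, hb.symm]
        · exact fun h => absurd hk h
      · rw [BoundedContinuousFunction.sum_apply, hE k hk, Finset.sum_eq_zero]
        intro b hb
        have : k ≠ b := fun h => hk (h ▸ hb)
        simp only [BoundedContinuousFunction.coe_smul, Pi.smul_apply, smul_eq_mul]
        have hz : indic {b} k = 0 := by
          simp [indic, ofSeq, Set.indicator, this]
        rw [hz, mul_zero]
    rw [key]
    rw [map_sum]
    apply Finset.sum_eq_zero
    intro m _
    rw [map_smul, hμ m]
    simp

end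
end

section
/- Let T_de : l∞ → l∞ be the delay map T_de(x) = (0, x_0, x_1, x_2, ...). Then a discount structure p ∈ Δ satisfies ⟨T_de(x), p⟩ = λ·⟨x, p⟩ for some λ ∈ ℝ and all x ∈ l∞ (i.e., p is an eigenvector of the adjoint T_de*) if and only if p is a Banach–Mazur limit or there exists δ ∈ [0,1) such that ⟨x,p⟩ = (1−δ)·Σ_{t=0}^∞ δ^t x_t for all x ∈ l∞. That is, Δ(T_de*) = ℬ ∪ { the exponential discounting functionals with parameter δ ∈ [0,1) }. -/
open scoped ENNReal BoundedContinuousFunction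

noncomputable section

lemma delaySeq_apply (x : Linf) (n : ℕ) :
    delaySeq x n = if n = 0 then 0 else x (n - 1) := rfl

lemma shiftSeq_apply (x : Linf) (n : ℕ) : shiftSeq x n = x (n + 1) := rfl

lemma indic_apply (A : Set ℕ) (n : ℕ) :
    indic A n = A.indicator (fun _ => (1 : ℝ)) n := rfl

lemma shift_delay (x : Linf) : shiftSeq (delaySeq x) = x := by
  ext n; simp [shiftSeq_apply, delaySeq_apply]

lemma delay_shift (x : Linf) :
    delaySeq (shiftSeq x) = x - x 0 • indic {0} := by
  ext n
  rcases n with _ | m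
  · simp [delaySeq_apply, indic_apply]
  · simp [delaySeq_apply, shiftSeq_apply, indic_apply, Set.indicator]

lemma delay_cst1 : delaySeq (cst 1) = cst 1 - indic {0} := by
  ext n
  rcases n with _ | m
  · simp [delaySeq_apply, indic_apply, cst_apply]
  · simp [delaySeq_apply, indic_apply, cst_apply, Set.indicator]

lemma delay_indic (n : ℕ) : delaySeq (indic {n}) = indic {n + 1} := by
  ext m
  rcases m with _ | k
  · simp [delaySeq_apply, indic_apply, Set.indicator]
  · simp [delaySeq_apply, indic_apply, Set.indicator]

def tailI (N : ℕ) : Linf := indic {m | N ≤ m}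

lemma tailI_apply (N m : ℕ) : tailI N m = if N ≤ m then 1 else 0 := by
  simp [tailI, indic_apply, Set.indicator]

lemma tailI_zero : tailI 0 = cst 1 := by
  ext m; simp [tailI_apply, cst_apply]

lemma tailI_succ (N : ℕ) : tailI (N + 1) = tailI N - indic {N} := by
  ext m
  simp only [tailI_apply, BoundedContinuousFunction.coe_sub, Pi.sub_apply,
    indic_apply, Set.indicator, Set.mem_singleton_iff]
  rcases lt_trichotomy m N with h | h | h
  · rw [if_neg (by omega), if_neg (by omega), if_neg (by omega)]; ring
  · rw [if_neg (by omega), if_pos (by omega), if_pos (by omega)]; ring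
  · rw [if_pos (by omega), if_pos (by omega), if_neg (by omega)]; ring

lemma posMono (p : Ba) (hp : IsPos p) {x y : Linf} (h : ∀ n, x n ≤ y n) :
    p x ≤ p y := by
  have h0 : 0 ≤ p (y - x) := hp (y - x) (fun n => by
    simp only [BoundedContinuousFunction.coe_sub, Pi.sub_apply, sub_nonneg]; exact h n)
  have := map_sub p y x
  linarith [this ▸ h0]

lemma summable_geom_mul {δ : ℝ} (h0 : 0 ≤ δ) (h1 : δ < 1) (y : Linf) :
    Summable fun t => δ ^ t * y t := by
  apply Summable.of_norm_bounded (g := fun t => δ ^ t * ‖y‖)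
    ((summable_geometric_of_lt_one h0 h1).mul_right _)
  intro t
  rw [Real.norm_eq_abs, abs_mul, abs_pow, abs_of_nonneg h0]
  exact mul_le_mul_of_nonneg_left
    (by simpa [Real.norm_eq_abs] using y.norm_coe_le_norm t) (pow_nonneg h0 t)

lemma discSum_delay {δ : ℝ} (h0 : 0 ≤ δ) (h1 : δ < 1) (x : Linf) :
    discSum δ (delaySeq x) = δ * discSum δ x := by
  have hsum : Summable fun t => δ ^ t * delaySeq x t := summable_geom_mul h0 h1 _
  have hfun : (fun n => δ ^ (n + 1) * delaySeq x (n + 1)) = fun n => δ * (δ ^ n * x n) := by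
    funext n
    simp only [delaySeq_apply, Nat.succ_ne_zero, if_false, Nat.add_sub_cancel]
    ring
  have h0' : ∑' t, δ ^ t * delaySeq x t = δ * ∑' t, δ ^ t * x t := by
    have hz : δ ^ 0 * delaySeq x 0 = 0 := by simp [delaySeq_apply]
    rw [Summable.tsum_eq_zero_add hsum, hz, zero_add, hfun, tsum_mul_left]
  unfold discSum; rw [h0']; ring

lemma geom_rep (p : Ba) (hpos : IsPos p)
    {lam : ℝ} (hl0 : 0 ≤ lam) (hl1 : lam < 1)
    (he : ∀ n : ℕ, p (indic {n}) = (1 - lam) * lam ^ n)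
    (htl : ∀ N : ℕ, p (tailI N) = lam ^ N) (x : Linf) :
    p x = discSum lam x := by
  have hs : Summable fun t => lam ^ t * x t := summable_geom_mul hl0 hl1 x
  have key : ∀ N : ℕ,
      |p x - (1 - lam) * ∑ t ∈ Finset.range N, lam ^ t * x t| ≤ ‖x‖ * lam ^ N := by
    intro N
    set s : Linf := ∑ t ∈ Finset.range N, x t • indic {t} with hs_def
    have hs_apply : ∀ m, s m = if m < N then x m else 0 := by
      intro m
      rw [hs_def, BoundedContinuousFunction.sum_apply]
      have : ∀ t ∈ Finset.range N, (x t • indic {t}) m = if m = t then x t else 0 := by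
        intro t _
        simp only [BoundedContinuousFunction.coe_smul, Pi.smul_apply, indic_apply,
          Set.indicator, Set.mem_singleton_iff, smul_eq_mul]
        split_ifs <;> simp
      rw [Finset.sum_congr rfl this, Finset.sum_ite_eq (Finset.range N) m x]
      simp [Finset.mem_range]
    have hps : p s = (1 - lam) * ∑ t ∈ Finset.range N, lam ^ t * x t := by
      rw [hs_def, map_sum, Finset.mul_sum]
      apply Finset.sum_congr rfl
      intro t _
      rw [map_smul, smul_eq_mul, he t]
      ring
    have habs : ∀ m, |x m| ≤ ‖x‖ := fun m => by
      simpa [Real.norm_eq_abs] using x.norm_coe_le_norm m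
    have hub : p (x - s) ≤ ‖x‖ * lam ^ N := by
      have := posMono p hpos (x := x - s) (y := ‖x‖ • tailI N) (fun m => by
        simp only [BoundedContinuousFunction.coe_sub, Pi.sub_apply,
          BoundedContinuousFunction.coe_smul, Pi.smul_apply, smul_eq_mul,
          hs_apply, tailI_apply]
        rcases lt_or_ge m N with h | h
        · rw [if_pos h, if_neg (by omega)]; simp
        · rw [if_neg (by omega), if_pos h]
          have := habs m
          have := le_abs_self (x m)
          linarith)
      rw [map_smul, smul_eq_mul, htl N] at this
      exact this
    have hlb : -(‖x‖ * lam ^ N) ≤ p (x - s) := by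
      have := posMono p hpos (x := -(‖x‖ • tailI N)) (y := x - s) (fun m => by
        simp only [BoundedContinuousFunction.coe_sub, Pi.sub_apply,
          BoundedContinuousFunction.coe_neg, Pi.neg_apply,
          BoundedContinuousFunction.coe_smul, Pi.smul_apply, smul_eq_mul,
          hs_apply, tailI_apply]
        rcases lt_or_ge m N with h | h
        · rw [if_neg (by omega : ¬ N ≤ m), if_pos h]; simp
        · rw [if_pos h, if_neg (by omega : ¬ m < N)]
          have := habs m
          have := neg_abs_le (x m)
          linarith)
      rw [map_neg, map_smul, smul_eq_mul, htl N] at this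
      exact this
    have hsub : p (x - s) = p x - (1 - lam) * ∑ t ∈ Finset.range N, lam ^ t * x t := by
      rw [map_sub, hps]
    rw [hsub] at hub hlb
    exact abs_le.mpr ⟨hlb, hub⟩
  have h2 : Filter.Tendsto (fun N => (1 - lam) * ∑ t ∈ Finset.range N, lam ^ t * x t)
      Filter.atTop (nhds (discSum lam x)) := by
    exact (hs.hasSum.tendsto_sum_nat).const_mul _
  have h3 : Filter.Tendsto (fun N : ℕ => ‖x‖ * lam ^ N) Filter.atTop (nhds 0) := by
    simpa using (tendsto_pow_atTop_nhds_zero_of_lt_one hl0 hl1).const_mul ‖x‖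
  have h4 : Filter.Tendsto (fun N => (1 - lam) * ∑ t ∈ Finset.range N, lam ^ t * x t)
      Filter.atTop (nhds (p x)) := by
    rw [tendsto_iff_dist_tendsto_zero]
    apply squeeze_zero (fun N => dist_nonneg) (fun N => ?_) h3
    simpa [Real.dist_eq, abs_sub_comm] using key N
  exact tendsto_nhds_unique h4 h2

/-- Lemma: eigenvectors of the adjoint of the delay map: a discount
structure `p` satisfies `⟨T_de(x), p⟩ = λ ⟨x, p⟩` for some `λ ∈ ℝ` and all `x` iff `p` is
a Banach–Mazur limit or an exponential discounting functional with parameter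
`δ ∈ [0,1)`. -/
theorem stmt19 :
    {p ∈ Delta | ∃ lam : ℝ, ∀ x : Linf, p (delaySeq x) = lam * p x} = BM ∪ Geom := by
  ext p
  simp only [Set.mem_setOf_eq, Set.mem_union, BM, Geom, Delta, Set.mem_sep_iff]
  constructor
  · rintro ⟨⟨hpos, h1⟩, lam, h⟩
    have he0 : p (indic {0}) = 1 - lam := by
      have hh := h (cst 1)
      rw [delay_cst1, map_sub, h1] at hh
      linarith
    have hlam_le : lam ≤ 1 := by
      have h0 : (0 : ℝ) ≤ p (indic {0}) := hpos _ (fun n => by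
        rw [indic_apply]; exact Set.indicator_nonneg (fun _ _ => zero_le_one) n)
      linarith
    have hlam_ge : 0 ≤ lam := by
      have h0 : (0 : ℝ) ≤ p (cst 1 - indic {0}) := hpos _ (fun n => by
        simp only [BoundedContinuousFunction.coe_sub, Pi.sub_apply, cst_apply,
          indic_apply, sub_nonneg]
        by_cases hn : n ∈ ({0} : Set ℕ) <;> simp [hn])
      have h2 : p (cst 1 - indic {0}) = lam := by
        rw [map_sub, h1, he0]; ring
      linarith
    by_cases hlam : lam = 1
    · left
      refine ⟨⟨hpos, h1⟩, fun x => ?_⟩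
      have hh := h (shiftSeq x)
      rw [delay_shift, map_sub, map_smul, smul_eq_mul, he0, hlam] at hh
      linarith
    · right
      have hl1 : lam < 1 := lt_of_le_of_ne hlam_le hlam
      have he : ∀ n, p (indic {n}) = (1 - lam) * lam ^ n := by
        intro n
        induction n with
        | zero => simpa using he0
        | succ k ih =>
          have hh := h (indic {k})
          rw [delay_indic] at hh
          rw [hh, ih]; ring
      have htl : ∀ N, p (tailI N) = lam ^ N := by
        intro N
        induction N with
        | zero => rw [tailI_zero]; simpa using h1
        | succ k ih => rw [tailI_succ, map_sub, ih, he k]; ring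
      exact ⟨lam, ⟨hlam_ge, hl1⟩, fun x => geom_rep p hpos hlam_ge hl1 he htl x⟩
  · rintro (⟨⟨hpos, h1⟩, hbm⟩ | ⟨δ, ⟨hd0, hd1⟩, hδ⟩)
    · exact ⟨⟨hpos, h1⟩, 1, fun x => by rw [← hbm (delaySeq x), shift_delay, one_mul]⟩
    · have hsum1 : p (cst 1) = 1 := by
        rw [hδ, discSum]
        have hcongr : ∀ t : ℕ, δ ^ t * cst 1 t = δ ^ t := fun t => by
          rw [cst_apply, mul_one]
        rw [tsum_congr hcongr, tsum_geometric_of_lt_one hd0 hd1]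
        have : (1 : ℝ) - δ ≠ 0 := ne_of_gt (by linarith)
        field_simp
      refine ⟨⟨?_, hsum1⟩, δ, fun x => by rw [hδ, hδ, discSum_delay hd0 hd1]⟩
      intro x hx
      rw [hδ, discSum]
      exact mul_nonneg (by linarith)
        (tsum_nonneg fun t => mul_nonneg (pow_nonneg hd0 t) (hx t))


end
end
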